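/- arXiv:0904.4927 — 2 statements merged into one kernel-verified Lean document; each statement's English description precedes it below -/
import Mathlib

section
/- Let h and m be positive integers, let G be a colored 𝔯-partite graph on Ω, let S ∈ S_{h,G}, and for each I ∈ binom(𝔯,2) and each e ∈ 𝕍_I(S) let F_e : C_I(G) → [−1,1] be a function; abbreviate F_e(G(e')) by F_e(e') for e' ∈ Ω_I. Then for every I ∈ binom(𝔯,2) and every e₀ ∈ 𝕍_I(S): ( E_{φ∈Φ(h)}[ ∏_{e∈𝕍₂(S)} F_e(φ(e)) · ∏_{v∈𝕍₁(S)} 𝟙[G(φ(v)) = S(v)] ] )² ≤ E_{ψ∈Φ(mh)} E_{e*∈Ω_I}[ ( E_{e∈Ω_I}[ F_{e₀}(e) · 𝟙[G(∂e) = S(∂e₀)] | e ≈_{∂(G/ψ)} e* ] )² ] · ( ∏_{v∈𝕍₁(S)} d_G(S⟨v⟩) ) · ( ( ∏_{v∈𝕍₁(S), v∉e₀} d_G(S⟨v⟩) ) + 1/m ), where φ ∈ Φ(h) and ψ ∈ Φ(mh) are random and 𝟙[·] denotes the Iverson bracket. -/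
open Finset
open scoped BigOperators Classical

/-! ## Framework: colored partite graphs, complexes, partitionwise maps,
regularization, relative densities and regularity (Ishigami's setting). -/

/-- Partitionwise maps `Φ(h)`: `h` sample vertices in each of the `r` parts. -/
abbrev PMap {r : ℕ} (Ω : Fin r → Type) (h : ℕ) : Type := ∀ i : Fin r, Fin h → Ω i

/-- The product weight of a partitionwise map (each sample independent). -/
noncomputable def pmapWeight {r : ℕ} (Ω : Fin r → Type) [∀ i, Fintype (Ω i)]
    (w : ∀ i, Ω i → ℝ) {h : ℕ} (φ : PMap Ω h) : ℝ :=
  ∏ i : Fin r, ∏ a : Fin h, w i (φ i a)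

/-- Expectation over a random partitionwise map in `Φ(h)`. -/
noncomputable def EPhi {r : ℕ} (Ω : Fin r → Type) [∀ i, Fintype (Ω i)]
    (w : ∀ i, Ω i → ℝ) (h : ℕ) (f : PMap Ω h → ℝ) : ℝ :=
  ∑ φ : PMap Ω h, pmapWeight Ω w φ * f φ

/-- Conditional expectation over a random partitionwise map in `Φ(h)`. -/
noncomputable def EPhiCond {r : ℕ} (Ω : Fin r → Type) [∀ i, Fintype (Ω i)]
    (w : ∀ i, Ω i → ℝ) (h : ℕ) (A : PMap Ω h → Prop) (f : PMap Ω h → ℝ) : ℝ :=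
  (∑ φ : PMap Ω h, if A φ then pmapWeight Ω w φ * f φ else 0) /
  (∑ φ : PMap Ω h, if A φ then pmapWeight Ω w φ else 0)

/-- A colored `𝔯`-partite graph on vertex sets `Ω i`: color sets `C1 i` (for vertices,
i.e. index-`{i}` edges) and `C2 i j` (for index-`{i,j}` edges), together with coloring
maps, symmetric in the two endpoints. -/
structure CGraph {r : ℕ} (Ω : Fin r → Type) (K₁ K₂ : Type) where
  C1 : Fin r → Finset K₁
  C2 : Fin r → Fin r → Finset K₂
  vCol : ∀ i, Ω i → K₁
  eCol : ∀ i j, Ω i → Ω j → K₂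
  eSymm : ∀ i j x y, eCol i j x y = eCol j i y x
  c2Symm : ∀ i j, C2 i j = C2 j i
  vMem : ∀ i x, vCol i x ∈ C1 i
  eMem : ∀ i j x y, eCol i j x y ∈ C2 i j

/-- `G` is `(b₁,b₂)`-colored: each color set `C_I` has at most `b_{|I|}` elements. -/
def CGraph.Bounded {r : ℕ} {Ω : Fin r → Type} {K₁ K₂ : Type}
    (G : CGraph Ω K₁ K₂) (b₁ b₂ : ℕ) : Prop :=
  (∀ i, (G.C1 i).card ≤ b₁) ∧ ∀ i j, i ≠ j → (G.C2 i j).card ≤ b₂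

/-- Relative density `d_G(c)` of a vertex (index-`{i}`) total color `c`:
the probability that a random vertex of `Ω i` has color `c`. -/
noncomputable def dV {r : ℕ} (Ω : Fin r → Type) [∀ i, Fintype (Ω i)]
    (w : ∀ i, Ω i → ℝ) {K₁ K₂ : Type} (G : CGraph Ω K₁ K₂) (i : Fin r) (c : K₁) : ℝ :=
  ∑ x : Ω i, if G.vCol i x = c then w i x else 0

/-- Relative density `d_G(c₂; ci, cj)` of an index-`{i,j}` total color:
the conditional probability that a random edge has color `c₂` given that its
endpoints have colors `ci`, `cj`. -/
noncomputable def dE {r : ℕ} (Ω : Fin r → Type) [∀ i, Fintype (Ω i)]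
    (w : ∀ i, Ω i → ℝ) {K₁ K₂ : Type} (G : CGraph Ω K₁ K₂) (i j : Fin r)
    (c₂ : K₂) (ci cj : K₁) : ℝ :=
  (∑ x : Ω i, ∑ y : Ω j,
      if G.eCol i j x y = c₂ ∧ G.vCol i x = ci ∧ G.vCol j y = cj then w i x * w j y else 0) /
  (∑ x : Ω i, ∑ y : Ω j, if G.vCol i x = ci ∧ G.vCol j y = cj then w i x * w j y else 0)

/-- A (simplicial) complex with `h` vertices in each of the `r` parts: a colored
partite graph where `none` is the (unique) invisible color of each index, and any
edge containing an invisible vertex is invisible. -/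
structure SComplex (r h : ℕ) (K₁ K₂ : Type) where
  vCol : Fin r → Fin h → Option K₁
  eCol : Fin r → Fin r → Fin h → Fin h → Option K₂
  eSymm : ∀ i j a b, eCol i j a b = eCol j i b a
  loopless : ∀ i a b, eCol i i a b = none
  down : ∀ i j a b, vCol i a = none → eCol i j a b = none

/-- `S ∈ S_{h,G}` : the visible colors of the complex `S` are (identified with)
colors of `G`. -/
def SComplex.MemS {r h : ℕ} {Ω : Fin r → Type} {K₁ K₂ : Type}
    (S : SComplex r h K₁ K₂) (G : CGraph Ω K₁ K₂) : Prop :=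
  (∀ i a c, S.vCol i a = some c → c ∈ G.C1 i) ∧
  (∀ i j a b c, S.eCol i j a b = some c → c ∈ G.C2 i j)

/-- `𝕍₁(S)`: the visible vertices of `S`. -/
noncomputable def V1 {r h : ℕ} {K₁ K₂ : Type} (S : SComplex r h K₁ K₂) :
    Finset (Fin r × Fin h) :=
  univ.filter fun p => S.vCol p.1 p.2 ≠ none

/-- `𝕍₂(S)`: the visible (size-2) edges of `S`, listed once each (`i < j`). -/
noncomputable def V2 {r h : ℕ} {K₁ K₂ : Type} (S : SComplex r h K₁ K₂) :
    Finset (Fin r × Fin r × Fin h × Fin h) :=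
  univ.filter fun q => q.1 < q.2.1 ∧ S.eCol q.1 q.2.1 q.2.2.1 q.2.2.2 ≠ none

/-- `d_G(S⟨v⟩)` for a vertex `v` of `S` (junk value `1` on invisible vertices). -/
noncomputable def dVS {r h : ℕ} (Ω : Fin r → Type) [∀ i, Fintype (Ω i)]
    (w : ∀ i, Ω i → ℝ) {K₁ K₂ : Type} (G : CGraph Ω K₁ K₂)
    (S : SComplex r h K₁ K₂) (p : Fin r × Fin h) : ℝ :=
  match S.vCol p.1 p.2 with
  | some c => dV Ω w G p.1 c
  | none => 1

/-- `d_G(S⟨e⟩)` for a size-2 edge `e` of `S` (junk value `1` on invisible edges). -/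
noncomputable def dES {r h : ℕ} (Ω : Fin r → Type) [∀ i, Fintype (Ω i)]
    (w : ∀ i, Ω i → ℝ) {K₁ K₂ : Type} (G : CGraph Ω K₁ K₂)
    (S : SComplex r h K₁ K₂) (q : Fin r × Fin r × Fin h × Fin h) : ℝ :=
  match S.eCol q.1 q.2.1 q.2.2.1 q.2.2.2, S.vCol q.1 q.2.2.1, S.vCol q.2.1 q.2.2.2 with
  | some c₂, some ci, some cj => dE Ω w G q.1 q.2.1 c₂ ci cj
  | _, _, _ => 1

/-- The event `G(φ(v)) = S(v)` for all visible vertices `v` of `S`. -/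
def vEvent {r h : ℕ} {Ω : Fin r → Type} {K₁ K₂ : Type} (G : CGraph Ω K₁ K₂)
    (S : SComplex r h K₁ K₂) (φ : PMap Ω h) : Prop :=
  ∀ p ∈ V1 S, some (G.vCol p.1 (φ p.1 p.2)) = S.vCol p.1 p.2

/-- The event `G(φ(e)) = S(e)` for all visible size-2 edges `e` of `S`. -/
def eEvent {r h : ℕ} {Ω : Fin r → Type} {K₁ K₂ : Type} (G : CGraph Ω K₁ K₂)
    (S : SComplex r h K₁ K₂) (φ : PMap Ω h) : Prop :=
  ∀ q ∈ V2 S, some (G.eCol q.1 q.2.1 (φ q.1 q.2.2.1) (φ q.2.1 q.2.2.2)) =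
    S.eCol q.1 q.2.1 q.2.2.1 q.2.2.2

/-- `P_{φ∈Φ(h)}[G(φ(e)) = S(e) for all e ∈ 𝕍(S)]`. -/
noncomputable def countProb {r h : ℕ} (Ω : Fin r → Type) [∀ i, Fintype (Ω i)]
    (w : ∀ i, Ω i → ℝ) {K₁ K₂ : Type} (G : CGraph Ω K₁ K₂)
    (S : SComplex r h K₁ K₂) : ℝ :=
  EPhi Ω w h fun φ => if vEvent G S φ ∧ eEvent G S φ then 1 else 0

/-- Value of an error function `δ` (defined on index-2 total colors) at `S⟨e⟩`. -/
noncomputable def deltaS {r h : ℕ} {K₁ K₂ : Type} (δ : Fin r → Fin r → K₂ → K₁ → K₁ → ℝ)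
    (S : SComplex r h K₁ K₂) (q : Fin r × Fin r × Fin h × Fin h) : ℝ :=
  match S.eCol q.1 q.2.1 q.2.2.1 q.2.2.2, S.vCol q.1 q.2.2.1, S.vCol q.2.1 q.2.2.2 with
  | some c₂, some ci, some cj => δ q.1 q.2.1 c₂ ci cj
  | _, _, _ => 0

/-- The counting equation (\ref{lj19}) for one complex `S`:
`P[G(φ(e)) = S(e) ∀ e ∈ 𝕍(S)] = ∏_{v∈𝕍₁(S)} d_G(S⟨v⟩) · ∏_{e∈𝕍₂(S)} (d_G(S⟨e⟩) ±̇ δ(S⟨e⟩))`,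
where `a ±̇ b` denotes a suitable number `c` with `max 0 (a-b) ≤ c ≤ min 1 (a+b)`. -/
def CountEqAt {r h : ℕ} (Ω : Fin r → Type) [∀ i, Fintype (Ω i)]
    (w : ∀ i, Ω i → ℝ) {K₁ K₂ : Type} (G : CGraph Ω K₁ K₂)
    (δ : Fin r → Fin r → K₂ → K₁ → K₁ → ℝ) (S : SComplex r h K₁ K₂) : Prop :=
  ∃ c : Fin r × Fin r × Fin h × Fin h → ℝ,
    (∀ q ∈ V2 S, max 0 (dES Ω w G S q - deltaS δ S q) ≤ c q ∧
        c q ≤ min 1 (dES Ω w G S q + deltaS δ S q)) ∧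
    countProb Ω w G S = (∏ p ∈ V1 S, dVS Ω w G S p) * ∏ q ∈ V2 S, c q

/-- `δ` is an `h`-error function of `G`: the counting equation holds for every
`S ∈ S_{h,G}`. -/
def IsErrorFun {r : ℕ} (Ω : Fin r → Type) [∀ i, Fintype (Ω i)]
    (w : ∀ i, Ω i → ℝ) {K₁ K₂ : Type} (G : CGraph Ω K₁ K₂) (h : ℕ)
    (δ : Fin r → Fin r → K₂ → K₁ → K₁ → ℝ) : Prop :=
  ∀ S : SComplex r h K₁ K₂, S.MemS G → CountEqAt Ω w G δ S

/-- `E_{e∈Ω_I}[δ(G⟨e⟩)]` for `I = {i,j}`. -/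
noncomputable def EdgeDeltaAvg {r : ℕ} (Ω : Fin r → Type) [∀ i, Fintype (Ω i)]
    (w : ∀ i, Ω i → ℝ) {K₁ K₂ : Type} (G : CGraph Ω K₁ K₂)
    (δ : Fin r → Fin r → K₂ → K₁ → K₁ → ℝ) (i j : Fin r) : ℝ :=
  ∑ x : Ω i, ∑ y : Ω j,
    w i x * w j y * δ i j (G.eCol i j x y) (G.vCol i x) (G.vCol j y)

/-- `G` is `(ε,h)`-regular. -/
def IsRegularG {r : ℕ} (Ω : Fin r → Type) [∀ i, Fintype (Ω i)]
    (w : ∀ i, Ω i → ℝ) {K₁ K₂ : Type} (G : CGraph Ω K₁ K₂) (h : ℕ) (ε : ℝ) : Prop :=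
  ∃ δ : Fin r → Fin r → K₂ → K₁ → K₁ → ℝ,
    (∀ i j c₂ ci cj, 0 ≤ δ i j c₂ ci cj) ∧
    IsErrorFun Ω w G h δ ∧
    ∀ i j : Fin r, i ≠ j → EdgeDeltaAvg Ω w G δ i j ≤ ε / (G.C2 i j).card

/-- `reg_h(G)`: the minimum `ε` such that `G` is `(ε,h)`-regular. -/
noncomputable def reg {r : ℕ} (Ω : Fin r → Type) [∀ i, Fintype (Ω i)]
    (w : ∀ i, Ω i → ℝ) {K₁ K₂ : Type} (G : CGraph Ω K₁ K₂) (h : ℕ) : ℝ :=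
  sInf {ε : ℝ | IsRegularG Ω w G h ε}

/-- The regularization `G/φ` of `G` by a partitionwise map `φ ∈ Φ(m)`: each vertex
`v ∈ Ω i` is recolored by its original color together with the colors of all edges
joining `v` to the sample points of `φ` in the other parts. Size-2 edges keep
their colors. -/
noncomputable def regz {r : ℕ} (Ω : Fin r → Type) [∀ i, Fintype (Ω i)]
    {K₁ K₂ : Type} [Fintype K₁] [Fintype K₂] (G : CGraph Ω K₁ K₂) {m : ℕ}
    (φ : PMap Ω m) : CGraph Ω (K₁ × (Fin r → Fin m → Option K₂)) K₂ where
  C1 i := univ.filter fun p : K₁ × (Fin r → Fin m → Option K₂) =>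
    p.1 ∈ G.C1 i ∧ ∀ j b, if j = i then p.2 j b = none
      else ∃ c ∈ G.C2 i j, p.2 j b = some c
  C2 := G.C2
  vCol i x := (G.vCol i x, fun j b => if j = i then none else some (G.eCol i j x (φ j b)))
  eCol := G.eCol
  eSymm := G.eSymm
  c2Symm := G.c2Symm
  vMem := by
    intro i x
    simp only [mem_filter, mem_univ, true_and]
    refine ⟨G.vMem i x, fun j b => ?_⟩
    by_cases hj : j = i
    · simp [hj]
    · simp only [hj, if_neg hj]
      exact ⟨G.eCol i j x (φ j b), G.eMem i j x (φ j b), rfl⟩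
  eMem := G.eMem

/-- Conditional expectation of `f` over a random pair `e = (x,y) ∈ Ω_{i} × Ω_{j}`
given the event `A`. -/
noncomputable def condEE {r : ℕ} (Ω : Fin r → Type) [∀ i, Fintype (Ω i)]
    (w : ∀ i, Ω i → ℝ) (i j : Fin r) (A : Ω i → Ω j → Prop) (f : Ω i → Ω j → ℝ) : ℝ :=
  (∑ x : Ω i, ∑ y : Ω j, if A x y then w i x * w j y * f x y else 0) /
  (∑ x : Ω i, ∑ y : Ω j, if A x y then w i x * w j y else 0)

/-- `e ≈_{∂(G/ψ)} e'` : the two pairs have the same frame color in the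
regularization `G/ψ`. -/
def frameRel {r : ℕ} (Ω : Fin r → Type) [∀ i, Fintype (Ω i)]
    {K₁ K₂ : Type} [Fintype K₁] [Fintype K₂] (G : CGraph Ω K₁ K₂) {m : ℕ}
    (ψ : PMap Ω m) (i j : Fin r) (x : Ω i) (y : Ω j) (x' : Ω i) (y' : Ω j) : Prop :=
  (regz Ω G ψ).vCol i x = (regz Ω G ψ).vCol i x' ∧
  (regz Ω G ψ).vCol j y = (regz Ω G ψ).vCol j y'

/-- `η(c₂; ci, cj)` (eq. (\ref{061220})) computed in `G`, with `N` random sample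
vertices in each part (`N = M·h` in the paper). -/
noncomputable def eta {r : ℕ} (Ω : Fin r → Type) [∀ i, Fintype (Ω i)]
    (w : ∀ i, Ω i → ℝ) {K₁ K₂ : Type} [Fintype K₁] [Fintype K₂]
    (G : CGraph Ω K₁ K₂) (N : ℕ) (i j : Fin r) (c₂ : K₂) (ci cj : K₁) : ℝ :=
  EPhi Ω w N fun ψ =>
    condEE Ω w i j (fun x' y' => G.vCol i x' = ci ∧ G.vCol j y' = cj) fun x' y' =>
      (condEE Ω w i j (fun x y => frameRel Ω G ψ i j x y x' y')
          (fun x y => if G.eCol i j x y = c₂ then 1 else 0) -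
        dE Ω w G i j c₂ ci cj) ^ 2

/-- `η(S⟨e⟩)` for a size-2 edge of a complex `S` (junk value `0` if invisible). -/
noncomputable def etaS {r h : ℕ} (Ω : Fin r → Type) [∀ i, Fintype (Ω i)]
    (w : ∀ i, Ω i → ℝ) {K₁ K₂ : Type} [Fintype K₁] [Fintype K₂]
    (G : CGraph Ω K₁ K₂) (N : ℕ) (S : SComplex r h K₁ K₂)
    (q : Fin r × Fin r × Fin h × Fin h) : ℝ :=
  match S.eCol q.1 q.2.1 q.2.2.1 q.2.2.2, S.vCol q.1 q.2.2.1, S.vCol q.2.1 q.2.2.2 with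
  | some c₂, some ci, some cj => eta Ω w G N q.1 q.2.1 c₂ ci cj
  | _, _, _ => 0

/-- `ε₁ := (ε/(6 b₂ binom(r,2)))²`. -/
noncomputable def eps1 (r b₂ : ℕ) (ε : ℝ) : ℝ := (ε / (6 * b₂ * r.choose 2)) ^ 2

/-- `C := √2 · binom(r,2) h² · (b₂/√ε₁)^{binom(r,2)h² − 1}`. -/
noncomputable def Cconst (r h b₂ : ℕ) (ε : ℝ) : ℝ :=
  Real.sqrt 2 * r.choose 2 * h ^ 2 *
    ((b₂ : ℝ) / Real.sqrt (eps1 r b₂ ε)) ^ (r.choose 2 * h ^ 2 - 1)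

/-- `M(m) := (b₁ b₂^{(r−1)m} / √ε₁)^{rh}` (as a sample count). -/
noncomputable def Mconst (r h b₁ b₂ : ℕ) (ε : ℝ) (m : ℕ) : ℕ :=
  ⌈(((b₁ : ℝ) * (b₂ : ℝ) ^ ((r - 1) * m)) / Real.sqrt (eps1 r b₂ ε)) ^ (r * h)⌉₊

/-- A vertex total color `c` of index `{i}` is bad. -/
def BadV {r : ℕ} (Ω : Fin r → Type) [∀ i, Fintype (Ω i)]
    (w : ∀ i, Ω i → ℝ) {K₁ K₂ : Type} (G : CGraph Ω K₁ K₂) (ε₁ : ℝ)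
    (i : Fin r) (c : K₁) : Prop :=
  dV Ω w G i c ≤ Real.sqrt ε₁ / (G.C1 i).card

/-- An index-`{i,j}` total color `(c₂; ci, cj)` is bad: some nonempty `I* ⊆ {i,j}`
has relative density at most `√ε₁/|C_{I*}|`. -/
def BadE {r : ℕ} (Ω : Fin r → Type) [∀ i, Fintype (Ω i)]
    (w : ∀ i, Ω i → ℝ) {K₁ K₂ : Type} (G : CGraph Ω K₁ K₂) (ε₁ : ℝ)
    (i j : Fin r) (c₂ : K₂) (ci cj : K₁) : Prop :=
  BadV Ω w G ε₁ i ci ∨ BadV Ω w G ε₁ j cj ∨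
    dE Ω w G i j c₂ ci cj ≤ Real.sqrt ε₁ / (G.C2 i j).card

/-- The error function `δ` of the paper: `1` on bad total colors, `C·√η` otherwise. -/
noncomputable def deltaDef {r : ℕ} (Ω : Fin r → Type) [∀ i, Fintype (Ω i)]
    (w : ∀ i, Ω i → ℝ) {K₁ K₂ : Type} [Fintype K₁] [Fintype K₂]
    (G : CGraph Ω K₁ K₂) (ε₁ Cc : ℝ) (N : ℕ)
    (i j : Fin r) (c₂ : K₂) (ci cj : K₁) : ℝ :=
  if BadE Ω w G ε₁ i j c₂ ci cj then 1 else Cc * Real.sqrt (eta Ω w G N i j c₂ ci cj)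

/-- `∏_{e∈D}(𝟙[G(φ(e)) = S(e)] − d_G(S⟨e⟩))`, single factor. -/
noncomputable def indMinusD {r h : ℕ} (Ω : Fin r → Type) [∀ i, Fintype (Ω i)]
    (w : ∀ i, Ω i → ℝ) {K₁ K₂ : Type} (G : CGraph Ω K₁ K₂)
    (S : SComplex r h K₁ K₂) (φ : PMap Ω h) (q : Fin r × Fin r × Fin h × Fin h) : ℝ :=
  (if some (G.eCol q.1 q.2.1 (φ q.1 q.2.2.1) (φ q.2.1 q.2.2.2)) =
      S.eCol q.1 q.2.1 q.2.2.1 q.2.2.2 then 1 else 0) - dES Ω w G S q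


/-! ### Auxiliary machinery for the proof -/

namespace MSBCAux

private lemma sum_pi_prod {α : Type} [Fintype α] [DecidableEq α] {δ : α → Type}
    [∀ a, Fintype (δ a)] (f : ∀ a, δ a → ℝ) :
    ∑ p : ∀ a, δ a, ∏ a, f a (p a) = ∏ a, ∑ x, f a x := by
  rw [Finset.prod_univ_sum, Fintype.piFinset_univ]

private lemma sum_pmap_prod {r : ℕ} {Ω : Fin r → Type} [∀ i, Fintype (Ω i)] {h : ℕ}
    (t : ∀ i : Fin r, Fin h → Ω i → ℝ) :
    ∑ φ : PMap Ω h, ∏ i, ∏ a, t i a (φ i a) = ∏ i, ∏ a, ∑ x, t i a x := by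
  have h1 : ∑ φ : PMap Ω h, ∏ i, ∏ a, t i a (φ i a)
      = ∏ i, ∑ g : Fin h → Ω i, ∏ a, t i a (g a) :=
    sum_pi_prod (δ := fun i => Fin h → Ω i) (fun i g => ∏ a, t i a (g a))
  rw [h1]
  exact Finset.prod_congr rfl fun i _ => sum_pi_prod (fun a x => t i a x)

variable {r h : ℕ} {Ω : Fin r → Type}

def updV (φ : PMap Ω h) (i : Fin r) (a : Fin h) (x : Ω i) : PMap Ω h :=
  Function.update φ i (Function.update (φ i) a x)

lemma updV_same (φ : PMap Ω h) (i : Fin r) (a : Fin h) (x : Ω i) :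
    updV φ i a x i a = x := by simp [updV]

lemma updV_ne_i (φ : PMap Ω h) {i : Fin r} (a : Fin h) (x : Ω i) {i' : Fin r}
    (hne : i' ≠ i) (a' : Fin h) : updV φ i a x i' a' = φ i' a' := by
  simp [updV, Function.update_of_ne hne]

lemma updV_ne_a (φ : PMap Ω h) (i : Fin r) {a : Fin h} (x : Ω i) {a' : Fin h}
    (hne : a' ≠ a) : updV φ i a x i a' = φ i a' := by
  simp [updV, Function.update_of_ne hne]

lemma updV_invol (φ : PMap Ω h) (i : Fin r) (a : Fin h) (x : Ω i) :
    updV (updV φ i a x) i a (φ i a) = φ := by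
  simp only [updV, Function.update_self, Function.update_idem, Function.update_eq_self]

section W
variable [∀ i, Fintype (Ω i)]

private lemma prod_comp_update {β : Type} (t : β → ℝ) (g : Fin h → β) (a : Fin h) (x : β) :
    ∏ a' : Fin h, t (Function.update g a x a') =
      t x * ∏ a' ∈ Finset.univ.erase a, t (g a') := by
  rw [← Finset.mul_prod_erase Finset.univ (fun a' => t (Function.update g a x a'))
    (Finset.mem_univ a), Function.update_self]
  congr 1
  exact Finset.prod_congr rfl fun b hb => by
    rw [Function.update_of_ne (Finset.ne_of_mem_erase hb)]

lemma pmapWeight_updV (w : ∀ i, Ω i → ℝ) (φ : PMap Ω h) (i : Fin r) (a : Fin h) (x : Ω i) :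
    pmapWeight Ω w (updV φ i a x) * w i (φ i a) = pmapWeight Ω w φ * w i x := by
  unfold pmapWeight
  rw [← Finset.mul_prod_erase Finset.univ (fun i' => ∏ a', w i' (updV φ i a x i' a'))
      (Finset.mem_univ i),
    ← Finset.mul_prod_erase Finset.univ (fun i' => ∏ a', w i' (φ i' a')) (Finset.mem_univ i)]
  have houter : ∏ i' ∈ Finset.univ.erase i, ∏ a', w i' (updV φ i a x i' a')
      = ∏ i' ∈ Finset.univ.erase i, ∏ a', w i' (φ i' a') :=
    Finset.prod_congr rfl fun i' hi' => Finset.prod_congr rfl fun a' _ => by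
      rw [updV_ne_i φ a x (Finset.ne_of_mem_erase hi')]
  have hinner1 : (∏ a', w i (updV φ i a x i a'))
      = w i x * ∏ a' ∈ Finset.univ.erase a, w i (φ i a') := by
    have hh : ∀ a', updV φ i a x i a' = Function.update (φ i) a x a' := fun a' => by
      simp [updV]
    simp only [hh]
    exact prod_comp_update (w i) (φ i) a x
  have hinner2 : (∏ a', w i (φ i a'))
      = w i (φ i a) * ∏ a' ∈ Finset.univ.erase a, w i (φ i a') :=
    (Finset.mul_prod_erase _ _ (Finset.mem_univ a)).symm
  rw [houter, hinner1, hinner2]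
  ring

lemma resum (w : ∀ i, Ω i → ℝ) (htot : ∀ i, ∑ x : Ω i, w i x = 1) (i : Fin r) (a : Fin h)
    (f : PMap Ω h → ℝ) :
    ∑ φ : PMap Ω h, pmapWeight Ω w φ * f φ
      = ∑ φ : PMap Ω h, pmapWeight Ω w φ * ∑ x : Ω i, w i x * f (updV φ i a x) := by
  have hσ : Function.Involutive
      (fun p : PMap Ω h × Ω i => (updV p.1 i a p.2, p.1 i a)) := by
    rintro ⟨φ, x⟩
    simp only [updV_same, updV_invol]
  calc ∑ φ : PMap Ω h, pmapWeight Ω w φ * f φ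
      = ∑ p : PMap Ω h × Ω i, pmapWeight Ω w p.1 * w i p.2 * f p.1 := by
        rw [Fintype.sum_prod_type]
        refine Finset.sum_congr rfl fun φ _ => ?_
        have : ∑ x : Ω i, pmapWeight Ω w φ * w i x * f φ
            = (pmapWeight Ω w φ * ∑ x : Ω i, w i x) * f φ := by
          rw [Finset.mul_sum, Finset.sum_mul]
        rw [this, htot i, mul_one]
    _ = ∑ p : PMap Ω h × Ω i, pmapWeight Ω w p.1 * w i p.2 * f (updV p.1 i a p.2) := by
        rw [← Equiv.sum_comp (Function.Involutive.toPerm _ hσ)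
          (fun p : PMap Ω h × Ω i => pmapWeight Ω w p.1 * w i p.2 * f p.1)]
        refine Finset.sum_congr rfl fun p _ => ?_
        obtain ⟨φ, x⟩ := p
        show pmapWeight Ω w (updV φ i a x) * w i (φ i a) * f (updV φ i a x) = _
        rw [pmapWeight_updV]
    _ = ∑ φ : PMap Ω h, pmapWeight Ω w φ * ∑ x : Ω i, w i x * f (updV φ i a x) := by
        rw [Fintype.sum_prod_type]
        refine Finset.sum_congr rfl fun φ _ => ?_
        rw [Finset.mul_sum]
        exact Finset.sum_congr rfl fun x _ => by ring

end W
end MSBCAux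

namespace MSBCAux
set_option linter.unusedSectionVars false
section Keys
variable {r : ℕ} {Ω : Fin r → Type} [∀ i, Fintype (Ω i)] (w : ∀ i, Ω i → ℝ) {i j : Fin r}

noncomputable def wwK (p : Ω i × Ω j) : ℝ := w i p.1 * w j p.2

variable {α β : Type} (u : Ω i → α) (v : Ω j → β)

def RelK (q p : Ω i × Ω j) : Prop := u q.1 = u p.1 ∧ v q.2 = v p.2

lemma RelK_refl (p : Ω i × Ω j) : RelK u v p p := ⟨rfl, rfl⟩

lemma RelK_symm {p q : Ω i × Ω j} (hpq : RelK u v p q) : RelK u v q p :=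
  ⟨hpq.1.symm, hpq.2.symm⟩

lemma RelK_comm (p q : Ω i × Ω j) : RelK u v p q ↔ RelK u v q p :=
  ⟨RelK_symm u v, RelK_symm u v⟩

lemma RelK_trans {p q z : Ω i × Ω j} (h1 : RelK u v p q) (h2 : RelK u v q z) :
    RelK u v p z := ⟨h1.1.trans h2.1, h1.2.trans h2.2⟩

noncomputable def NumK (f : Ω i × Ω j → ℝ) (p : Ω i × Ω j) : ℝ :=
  ∑ q, if RelK u v q p then wwK w q * f q else 0

noncomputable def DenK (p : Ω i × Ω j) : ℝ :=
  ∑ q, if RelK u v q p then wwK w q else 0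

noncomputable def gK (f : Ω i × Ω j → ℝ) (p : Ω i × Ω j) : ℝ :=
  NumK w u v f p / DenK w u v p

noncomputable def QK (f : Ω i × Ω j → ℝ) : ℝ :=
  ∑ p, wwK w p * gK w u v f p ^ 2

lemma QK_def (f : Ω i × Ω j → ℝ) : QK w u v f = ∑ p, wwK w p * gK w u v f p ^ 2 := rfl

variable (hw : ∀ i x, 0 ≤ w i x)
include hw

lemma wwK_nonneg (p : Ω i × Ω j) : 0 ≤ wwK w p := mul_nonneg (hw _ _) (hw _ _)

lemma DenK_nonneg (p : Ω i × Ω j) : 0 ≤ DenK w u v p :=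
  Finset.sum_nonneg fun q _ => by
    by_cases hq : RelK u v q p
    · rw [if_pos hq]; exact wwK_nonneg w hw q
    · rw [if_neg hq]

lemma wwK_le_DenK (p : Ω i × Ω j) : wwK w p ≤ DenK w u v p := by
  have h1 : (if RelK u v p p then wwK w p else 0) ≤ DenK w u v p :=
    Finset.single_le_sum (f := fun q => if RelK u v q p then wwK w q else 0)
      (fun q _ => by
        show 0 ≤ if RelK u v q p then wwK w q else 0
        by_cases hq : RelK u v q p
        · rw [if_pos hq]; exact wwK_nonneg w hw q
        · rw [if_neg hq])
      (Finset.mem_univ p)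
  rwa [if_pos (RelK_refl u v p)] at h1

lemma wwK_eq_zero_of_DenK (p : Ω i × Ω j) (hD : DenK w u v p = 0) :
    wwK w p = 0 :=
  le_antisymm (hD ▸ wwK_le_DenK w u v hw p) (wwK_nonneg w hw p)

lemma QK_nonneg (f : Ω i × Ω j → ℝ) : 0 ≤ QK w u v f :=
  Finset.sum_nonneg fun p _ => mul_nonneg (wwK_nonneg w hw p) (sq_nonneg _)

omit hw

lemma DenK_congr {p q : Ω i × Ω j} (hpq : RelK u v p q) :
    DenK w u v p = DenK w u v q := by
  unfold DenK
  refine Finset.sum_congr rfl fun z _ => ?_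
  have hiff : RelK u v z p ↔ RelK u v z q :=
    ⟨fun hz => RelK_trans u v hz hpq, fun hz => RelK_trans u v hz (RelK_symm u v hpq)⟩
  simp only [hiff]

lemma sum_rel_wwK (q : Ω i × Ω j) :
    ∑ p, (if RelK u v q p then wwK w p else 0) = DenK w u v q := by
  unfold DenK
  refine Finset.sum_congr rfl fun p _ => ?_
  simp only [RelK_comm u v q p]

include hw

lemma pullK (f R : Ω i × Ω j → ℝ)
    (hR : ∀ p q, RelK u v p q → R p = R q) :
    ∑ p, wwK w p * f p * R p = ∑ p, wwK w p * gK w u v f p * R p := by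
  symm
  calc ∑ p, wwK w p * gK w u v f p * R p
      = ∑ p, ∑ q, (if RelK u v q p then
          wwK w q * f q * (wwK w p * R p / DenK w u v p) else 0) := by
        refine Finset.sum_congr rfl fun p _ => ?_
        rw [gK]
        have h1 : wwK w p * (NumK w u v f p / DenK w u v p) * R p
            = NumK w u v f p * (wwK w p * R p / DenK w u v p) := by ring
        rw [h1, NumK, Finset.sum_mul]
        exact Finset.sum_congr rfl fun q _ => by rw [ite_mul, zero_mul]
    _ = ∑ q, ∑ p, (if RelK u v q p then
          wwK w q * f q * (wwK w p * R p / DenK w u v p) else 0) :=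
        Finset.sum_comm
    _ = ∑ p, wwK w p * f p * R p := by
        refine Finset.sum_congr rfl fun q _ => ?_
        by_cases hD : DenK w u v q = 0
        · have hww : wwK w q = 0 := wwK_eq_zero_of_DenK w u v hw q hD
          rw [hww]
          simp
        · have hterm : ∀ p, (if RelK u v q p then
              wwK w q * f q * (wwK w p * R p / DenK w u v p) else 0)
              = (if RelK u v q p then wwK w p else 0)
                  * (wwK w q * f q * R q / DenK w u v q) := by
            intro p
            by_cases hqp : RelK u v q p
            · rw [if_pos hqp, if_pos hqp, hR p q (RelK_symm u v hqp),
                DenK_congr w u v (RelK_symm u v hqp)]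
              ring
            · rw [if_neg hqp, if_neg hqp, zero_mul]
          rw [Finset.sum_congr rfl fun p _ => hterm p, ← Finset.sum_mul,
            sum_rel_wwK, mul_comm, div_mul_cancel₀ _ hD]

lemma towerK {α' β' : Type} (u' : Ω i → α') (v' : Ω j → β')
    (hrefine : ∀ p q, RelK u' v' p q → RelK u v p q) (f : Ω i × Ω j → ℝ) (p₀ : Ω i × Ω j) :
    NumK w u v f p₀
      = ∑ p, if RelK u v p p₀ then wwK w p * gK w u' v' f p else 0 := by
  symm
  calc ∑ p, (if RelK u v p p₀ then wwK w p * gK w u' v' f p else 0)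
      = ∑ p, ∑ q, (if RelK u v p p₀ ∧ RelK u' v' q p then
          wwK w q * f q * (wwK w p / DenK w u' v' p) else 0) := by
        refine Finset.sum_congr rfl fun p _ => ?_
        by_cases hp : RelK u v p p₀
        · rw [if_pos hp, gK]
          have h1 : wwK w p * (NumK w u' v' f p / DenK w u' v' p)
              = NumK w u' v' f p * (wwK w p / DenK w u' v' p) := by ring
          rw [h1, NumK, Finset.sum_mul]
          refine Finset.sum_congr rfl fun q _ => ?_
          rw [ite_mul, zero_mul]
          refine if_congr ?_ rfl rfl
          simp [hp]
        · rw [if_neg hp]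
          symm
          exact Finset.sum_eq_zero fun q _ => if_neg (by tauto)
    _ = ∑ q, ∑ p, (if RelK u v p p₀ ∧ RelK u' v' q p then
          wwK w q * f q * (wwK w p / DenK w u' v' p) else 0) :=
        Finset.sum_comm
    _ = ∑ q, (if RelK u v q p₀ then wwK w q * f q else 0) := by
        refine Finset.sum_congr rfl fun q _ => ?_
        by_cases hD : DenK w u' v' q = 0
        · have hww : wwK w q = 0 := wwK_eq_zero_of_DenK w u' v' hw q hD
          rw [hww]
          simp
        · by_cases hq0 : RelK u v q p₀
          · have hterm : ∀ p, (if RelK u v p p₀ ∧ RelK u' v' q p then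
                wwK w q * f q * (wwK w p / DenK w u' v' p) else 0)
                = (if RelK u' v' q p then wwK w p else 0)
                    * (wwK w q * f q / DenK w u' v' q) := by
              intro p
              by_cases hqp : RelK u' v' q p
              · have hpp₀ : RelK u v p p₀ :=
                  RelK_trans u v (RelK_symm u v (hrefine q p hqp)) hq0
                rw [if_pos ⟨hpp₀, hqp⟩, if_pos hqp,
                  DenK_congr w u' v' (RelK_symm u' v' hqp)]
                ring
              · rw [if_neg (by tauto), if_neg hqp, zero_mul]
            rw [Finset.sum_congr rfl fun p _ => hterm p, ← Finset.sum_mul,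
              sum_rel_wwK, mul_comm, div_mul_cancel₀ _ hD, if_pos hq0]
          · rw [if_neg hq0]
            refine Finset.sum_eq_zero fun p _ => if_neg ?_
            rintro ⟨hpp₀, hqp⟩
            exact hq0 (RelK_trans u v (hrefine q p hqp) hpp₀)

lemma QK_le_QK {α' β' : Type} (u' : Ω i → α') (v' : Ω j → β')
    (hrefine : ∀ p q, RelK u' v' p q → RelK u v p q) (f : Ω i × Ω j → ℝ) :
    QK w u v f ≤ QK w u' v' f := by
  have step1 : ∀ p₀, wwK w p₀ * gK w u v f p₀ ^ 2
      ≤ wwK w p₀ * (∑ p, if RelK u v p p₀ then wwK w p * gK w u' v' f p ^ 2 else 0)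
          / DenK w u v p₀ := by
    intro p₀
    by_cases hD : DenK w u v p₀ = 0
    · have hww : wwK w p₀ = 0 := wwK_eq_zero_of_DenK w u v hw p₀ hD
      rw [hww, zero_mul, zero_mul, zero_div]
    · have hDpos : 0 < DenK w u v p₀ := (DenK_nonneg w u v hw p₀).lt_of_ne (Ne.symm hD)
      have hCS : NumK w u v f p₀ ^ 2
          ≤ DenK w u v p₀ * ∑ p, (if RelK u v p p₀ then wwK w p * gK w u' v' f p ^ 2 else 0) := by
        rw [towerK w u v hw u' v' hrefine f p₀]
        have h1 : ∀ p, (if RelK u v p p₀ then wwK w p * gK w u' v' f p else 0)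
            = Real.sqrt (if RelK u v p p₀ then wwK w p else 0)
              * (Real.sqrt (if RelK u v p p₀ then wwK w p else 0) * gK w u' v' f p) := by
          intro p
          rw [← mul_assoc, Real.mul_self_sqrt (by
            by_cases hp : RelK u v p p₀
            · rw [if_pos hp]; exact wwK_nonneg w hw p
            · rw [if_neg hp]), ite_mul, zero_mul]
        rw [Finset.sum_congr rfl fun p _ => h1 p]
        calc (∑ p, Real.sqrt (if RelK u v p p₀ then wwK w p else 0)
              * (Real.sqrt (if RelK u v p p₀ then wwK w p else 0) * gK w u' v' f p)) ^ 2
            ≤ (∑ p, Real.sqrt (if RelK u v p p₀ then wwK w p else 0) ^ 2)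
              * ∑ p, (Real.sqrt (if RelK u v p p₀ then wwK w p else 0) * gK w u' v' f p) ^ 2 :=
              Finset.sum_mul_sq_le_sq_mul_sq _ _ _
          _ = DenK w u v p₀ * ∑ p, (if RelK u v p p₀ then wwK w p * gK w u' v' f p ^ 2 else 0) := by
              congr 1
              · refine Finset.sum_congr rfl fun p _ => ?_
                rw [Real.sq_sqrt (by
                  by_cases hp : RelK u v p p₀
                  · rw [if_pos hp]; exact wwK_nonneg w hw p
                  · rw [if_neg hp])]
              · refine Finset.sum_congr rfl fun p _ => ?_
                rw [mul_pow, Real.sq_sqrt (by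
                  by_cases hp : RelK u v p p₀
                  · rw [if_pos hp]; exact wwK_nonneg w hw p
                  · rw [if_neg hp]), ite_mul, zero_mul]
      rw [gK, div_pow]
      calc wwK w p₀ * (NumK w u v f p₀ ^ 2 / DenK w u v p₀ ^ 2)
          = wwK w p₀ * NumK w u v f p₀ ^ 2 / DenK w u v p₀ ^ 2 := by ring
        _ ≤ wwK w p₀ * (DenK w u v p₀ *
              ∑ p, (if RelK u v p p₀ then wwK w p * gK w u' v' f p ^ 2 else 0))
              / DenK w u v p₀ ^ 2 := by
            refine (div_le_div_iff_of_pos_right (by positivity)).mpr ?_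
            exact mul_le_mul_of_nonneg_left hCS (wwK_nonneg w hw p₀)
        _ = wwK w p₀ * (∑ p, if RelK u v p p₀ then wwK w p * gK w u' v' f p ^ 2 else 0)
              / DenK w u v p₀ := by
            field_simp
  calc QK w u v f
      ≤ ∑ p₀, wwK w p₀ * (∑ p, if RelK u v p p₀ then wwK w p * gK w u' v' f p ^ 2 else 0)
          / DenK w u v p₀ := Finset.sum_le_sum fun p₀ _ => step1 p₀
    _ = ∑ p₀, ∑ p, (if RelK u v p p₀ then
          wwK w p * gK w u' v' f p ^ 2 * (wwK w p₀ / DenK w u v p₀) else 0) := by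
        refine Finset.sum_congr rfl fun p₀ _ => ?_
        have h1 : wwK w p₀ * (∑ p, if RelK u v p p₀ then wwK w p * gK w u' v' f p ^ 2 else 0)
            / DenK w u v p₀
            = (∑ p, if RelK u v p p₀ then wwK w p * gK w u' v' f p ^ 2 else 0)
              * (wwK w p₀ / DenK w u v p₀) := by ring
        rw [h1, Finset.sum_mul]
        exact Finset.sum_congr rfl fun p _ => by rw [ite_mul, zero_mul]
    _ = ∑ p, ∑ p₀, (if RelK u v p p₀ then
          wwK w p * gK w u' v' f p ^ 2 * (wwK w p₀ / DenK w u v p₀) else 0) :=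
        Finset.sum_comm
    _ ≤ ∑ p, wwK w p * gK w u' v' f p ^ 2 := by
        refine Finset.sum_le_sum fun p _ => ?_
        have hC : 0 ≤ wwK w p * gK w u' v' f p ^ 2 :=
          mul_nonneg (wwK_nonneg w hw p) (sq_nonneg _)
        have h2 : ∀ p₀, (if RelK u v p p₀ then
            wwK w p * gK w u' v' f p ^ 2 * (wwK w p₀ / DenK w u v p₀) else 0)
            = (wwK w p * gK w u' v' f p ^ 2 / DenK w u v p)
                * (if RelK u v p p₀ then wwK w p₀ else 0) := by
          intro p₀
          by_cases hp₀ : RelK u v p p₀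
          · rw [if_pos hp₀, if_pos hp₀, ← DenK_congr w u v hp₀]
            ring
          · rw [if_neg hp₀, if_neg hp₀, mul_zero]
        rw [Finset.sum_congr rfl fun p₀ _ => h2 p₀, ← Finset.mul_sum, sum_rel_wwK]
        by_cases hD : DenK w u v p = 0
        · rw [hD, mul_zero]
          exact hC
        · rw [div_mul_cancel₀ _ hD]
    _ = QK w u' v' f := rfl

end Keys
end MSBCAux

namespace MSBCAux
set_option linter.unusedSectionVars false

lemma condEE_eq_gK {r : ℕ} {Ω : Fin r → Type} [∀ i, Fintype (Ω i)] (w : ∀ i, Ω i → ℝ)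
    {i j : Fin r} {α β : Type} (u : Ω i → α) (v : Ω j → β)
    (f : Ω i → Ω j → ℝ) (x' : Ω i) (y' : Ω j) :
    condEE Ω w i j (fun x y => u x = u x' ∧ v y = v y') f
      = gK w u v (fun p => f p.1 p.2) (x', y') := by
  rw [condEE, gK, NumK, DenK, Fintype.sum_prod_type, Fintype.sum_prod_type]
  rfl

private lemma fs_identity (t : ℕ → ℝ) (m : ℕ) :
    ∑ n ∈ Finset.range m, (∏ l ∈ Finset.range n, (1 - t l)) * t n
      = 1 - ∏ l ∈ Finset.range m, (1 - t l) := by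
  induction m with
  | zero => simp
  | succ m ih => rw [Finset.sum_range_succ, ih, Finset.prod_range_succ]; ring

private lemma fs_le_one (t : ℕ → ℝ) (h1 : ∀ n, t n ≤ 1) (m : ℕ) :
    ∑ n ∈ Finset.range m, (∏ l ∈ Finset.range n, (1 - t l)) * t n ≤ 1 := by
  rw [fs_identity]
  have h2 : 0 ≤ ∏ l ∈ Finset.range m, (1 - t l) :=
    Finset.prod_nonneg fun l _ => by linarith [h1 l]
  linarith

private lemma geom_lower (D : ℝ) (hD0 : 0 ≤ D) (hD1 : D ≤ 1) (m : ℕ) (hm : 1 ≤ m) :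
    1 ≤ (D + 1 / (m : ℝ)) * ∑ n ∈ Finset.range m, (1 - D) ^ n := by
  set q := 1 - D with hq
  have hq0 : 0 ≤ q := by simp [hq]; linarith
  have hq1 : q ≤ 1 := by simp [hq]; linarith
  have hmpos : (0 : ℝ) < (m : ℝ) := by exact_mod_cast Nat.lt_of_lt_of_le Nat.zero_lt_one hm
  have hgeom : D * ∑ n ∈ Finset.range m, q ^ n = 1 - q ^ m := by
    have hgm := geom_sum_mul q m
    have hDq : D = 1 - q := by rw [hq]; ring
    rw [hDq]
    linear_combination -hgm
  have hS : (m : ℝ) * q ^ m ≤ ∑ n ∈ Finset.range m, q ^ n := by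
    calc (m : ℝ) * q ^ m = ∑ _n ∈ Finset.range m, q ^ m := by
          rw [Finset.sum_const, Finset.card_range, nsmul_eq_mul]
      _ ≤ ∑ n ∈ Finset.range m, q ^ n :=
          Finset.sum_le_sum fun n hn =>
            pow_le_pow_of_le_one hq0 hq1 (le_of_lt (Finset.mem_range.mp hn))
  have h2 : q ^ m ≤ (1 / (m : ℝ)) * ∑ n ∈ Finset.range m, q ^ n := by
    calc q ^ m = (1 / (m : ℝ)) * ((m : ℝ) * q ^ m) := by field_simp
      _ ≤ (1 / (m : ℝ)) * ∑ n ∈ Finset.range m, q ^ n :=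
          mul_le_mul_of_nonneg_left hS (by positivity)
  calc (1 : ℝ) = (1 - q ^ m) + q ^ m := by ring
    _ ≤ D * (∑ n ∈ Finset.range m, q ^ n) + (1 / (m : ℝ)) * ∑ n ∈ Finset.range m, q ^ n :=
        add_le_add (le_of_eq hgeom.symm) h2
    _ = (D + 1 / (m : ℝ)) * ∑ n ∈ Finset.range m, q ^ n := by ring

private lemma prod_ite_lt {m : ℕ} (k : Fin m) (f g : Fin m → ℝ) :
    ∏ l : Fin m, (if l < k then f l else if l = k then g l else 1)
      = (∏ l ∈ Finset.Iio k, f l) * g k := by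
  rw [← Finset.mul_prod_erase Finset.univ _ (Finset.mem_univ k)]
  have hk : (if k < k then f k else if k = k then g k else 1) = g k := by simp
  rw [hk]
  have h2 : ∏ l ∈ Finset.univ.erase k, (if l < k then f l else if l = k then g l else 1)
      = ∏ l ∈ Finset.univ.erase k, (if l < k then f l else 1) :=
    Finset.prod_congr rfl fun l hl => by
      by_cases hlk : l < k
      · simp [hlk]
      · simp [hlk, Finset.ne_of_mem_erase hl]
  rw [h2, ← Finset.prod_filter]
  have h3 : (Finset.univ.erase k).filter (fun l => l < k) = Finset.Iio k := by
    ext l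
    simp only [Finset.mem_filter, Finset.mem_erase, Finset.mem_univ, Finset.mem_Iio,
      true_and, and_true]
    exact ⟨fun hh => hh.2, fun hh => ⟨ne_of_lt hh, hh⟩⟩
  rw [h3, mul_comm]

private lemma fin_fs_le_one {m : ℕ} (t : Fin m → ℝ) (h1 : ∀ k, t k ≤ 1) :
    ∑ k : Fin m, (∏ l ∈ Finset.Iio k, (1 - t l)) * t k ≤ 1 := by
  set t' : ℕ → ℝ := fun n => if hn : n < m then t ⟨n, hn⟩ else 0 with ht'
  have ht'k : ∀ k : Fin m, t' (k : ℕ) = t k := fun k => by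
    rw [ht']
    simp only [Fin.is_lt, dif_pos, Fin.eta]
  have hconv : ∀ k : Fin m, (∏ l ∈ Finset.Iio k, (1 - t l))
      = ∏ l ∈ Finset.range (k : ℕ), (1 - t' l) := by
    intro k
    rw [← Nat.Iio_eq_range, ← Fin.map_valEmbedding_Iio, Finset.prod_map]
    exact Finset.prod_congr rfl fun l _ => by
      rw [show t' (Fin.valEmbedding l) = t' (l : ℕ) from rfl, ht'k l]
  have h1' : ∀ n, t' n ≤ 1 := fun n => by
    rw [ht']
    by_cases hn : n < m
    · simp only [dif_pos hn]
      exact h1 _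
    · simp only [dif_neg hn]
      norm_num
  calc ∑ k : Fin m, (∏ l ∈ Finset.Iio k, (1 - t l)) * t k
      = ∑ k : Fin m, (∏ l ∈ Finset.range ((k : ℕ)), (1 - t' l)) * t' (k : ℕ) :=
        Finset.sum_congr rfl fun k _ => by rw [hconv k, ht'k k]
    _ = ∑ n ∈ Finset.range m, (∏ l ∈ Finset.range n, (1 - t' l)) * t' n :=
        Fin.sum_univ_eq_sum_range (fun n => (∏ l ∈ Finset.range n, (1 - t' l)) * t' n) m
    _ ≤ 1 := fs_le_one t' h1' m

section Blocks
variable {r : ℕ} {Ω : Fin r → Type} [∀ i, Fintype (Ω i)] (w : ∀ i, Ω i → ℝ) (m h : ℕ)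

def blockMap (ψ : PMap Ω (m * h)) (k : Fin m) : PMap Ω h :=
  fun i b => ψ i (finProdFinEquiv (k, b))

def blockEquiv : PMap Ω (m * h) ≃ (Fin m → PMap Ω h) where
  toFun ψ := fun k => blockMap m h ψ k
  invFun ρ := fun i c => ρ (finProdFinEquiv.symm c).1 i (finProdFinEquiv.symm c).2
  left_inv ψ := by
    funext i c
    show ψ i (finProdFinEquiv ((finProdFinEquiv.symm c).1, (finProdFinEquiv.symm c).2)) = ψ i c
    rw [Prod.mk.eta, Equiv.apply_symm_apply]
  right_inv ρ := by
    funext k i b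
    show ρ (finProdFinEquiv.symm (finProdFinEquiv (k, b))).1 i
      (finProdFinEquiv.symm (finProdFinEquiv (k, b))).2 = ρ k i b
    rw [Equiv.symm_apply_apply]

lemma blockMap_symm (ρ : Fin m → PMap Ω h) (k : Fin m) :
    blockMap m h ((blockEquiv (Ω := Ω) m h).symm ρ) k = ρ k :=
  congrFun ((blockEquiv (Ω := Ω) m h).apply_symm_apply ρ) k

lemma pmapWeight_blocks (ρ : Fin m → PMap Ω h) :
    pmapWeight Ω w ((blockEquiv (Ω := Ω) m h).symm ρ) = ∏ k, pmapWeight Ω w (ρ k) := by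
  unfold pmapWeight
  have h1 : ∀ i : Fin r, ∏ c : Fin (m * h), w i (((blockEquiv (Ω := Ω) m h).symm ρ) i c)
      = ∏ k : Fin m, ∏ b : Fin h, w i (ρ k i b) := by
    intro i
    rw [← Equiv.prod_comp finProdFinEquiv
      (fun c => w i (((blockEquiv (Ω := Ω) m h).symm ρ) i c)), Fintype.prod_prod_type]
    refine Finset.prod_congr rfl fun k _ => Finset.prod_congr rfl fun b _ => ?_
    show w i (ρ (finProdFinEquiv.symm (finProdFinEquiv (k, b))).1 i
      (finProdFinEquiv.symm (finProdFinEquiv (k, b))).2) = _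
    rw [Equiv.symm_apply_apply]
  rw [Finset.prod_congr rfl fun i _ => h1 i, Finset.prod_comm]

end Blocks
end MSBCAux

open MSBCAux in
/-- Lemma: mean square bounds correlation, eq. (11). For `S ∈ S_{h,G}`,
functions `F_e : C_I(G) → [−1,1]` for the visible edges, and a visible edge
`e₀ = {(i₀,a₀),(j₀,b₀)} ∈ 𝕍_I(S)`:
`(E_{φ∈Φ(h)}[∏_{e∈𝕍₂(S)} F_e(φ(e)) ∏_{v∈𝕍₁(S)} 𝟙[G(φ(v))=S(v)]])² ≤
 E_{ψ∈Φ(mh)} E_{e*∈Ω_I}[(E_{e∈Ω_I}[F_{e₀}(e)·𝟙[G(∂e)=S(∂e₀)] | e ≈_{∂(G/ψ)} e*])²]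
 · (∏_{v∈𝕍₁(S)} d_G(S⟨v⟩)) · ((∏_{v∈𝕍₁(S), v∉e₀} d_G(S⟨v⟩)) + 1/m)`. -/
theorem mean_square_bounds_correlation {r : ℕ} (Ω : Fin r → Type)
    [∀ i, Fintype (Ω i)] [∀ i, Nonempty (Ω i)] (w : ∀ i, Ω i → ℝ)
    (hw : ∀ i x, 0 ≤ w i x) (htot : ∀ i, ∑ x : Ω i, w i x = 1)
    {K₁ K₂ : Type} [Fintype K₁] [Fintype K₂] (G : CGraph Ω K₁ K₂)
    (h m : ℕ) (hh : 1 ≤ h) (hm : 1 ≤ m)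
    (S : SComplex r h K₁ K₂) (hS : S.MemS G)
    (F : (Fin r × Fin r × Fin h × Fin h) → K₂ → ℝ)
    (hF : ∀ q ∈ V2 S, ∀ c ∈ G.C2 q.1 q.2.1, |F q c| ≤ 1)
    (i₀ j₀ : Fin r) (a₀ b₀ : Fin h) (he₀ : (i₀, j₀, a₀, b₀) ∈ V2 S) :
    (EPhi Ω w h (fun φ =>
        (∏ q ∈ V2 S, F q (G.eCol q.1 q.2.1 (φ q.1 q.2.2.1) (φ q.2.1 q.2.2.2))) *
        ∏ p ∈ V1 S,
          (if some (G.vCol p.1 (φ p.1 p.2)) = S.vCol p.1 p.2 then (1 : ℝ) else 0))) ^ 2 ≤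
      (EPhi Ω w (m * h) fun ψ =>
          ∑ x' : Ω i₀, ∑ y' : Ω j₀, w i₀ x' * w j₀ y' *
            (condEE Ω w i₀ j₀ (fun x y => frameRel Ω G ψ i₀ j₀ x y x' y')
              (fun x y => F (i₀, j₀, a₀, b₀) (G.eCol i₀ j₀ x y) *
                (if some (G.vCol i₀ x) = S.vCol i₀ a₀ ∧
                    some (G.vCol j₀ y) = S.vCol j₀ b₀ then (1 : ℝ) else 0))) ^ 2) *
        ((∏ p ∈ V1 S, dVS Ω w G S p) *
          ((∏ p ∈ ((V1 S).erase (i₀, a₀)).erase (j₀, b₀), dVS Ω w G S p) + 1 / m)) := by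
  classical
  -- ## basic membership facts
  have he₀' : i₀ < j₀ ∧ S.eCol i₀ j₀ a₀ b₀ ≠ none := (Finset.mem_filter.mp he₀).2
  have hij : i₀ < j₀ := he₀'.1
  have hijne : i₀ ≠ j₀ := ne_of_lt hij
  have hevis : S.eCol i₀ j₀ a₀ b₀ ≠ none := he₀'.2
  have hva : S.vCol i₀ a₀ ≠ none := fun hnone => hevis (S.down i₀ j₀ a₀ b₀ hnone)
  have hvb : S.vCol j₀ b₀ ≠ none := fun hnone => hevis (by
    rw [S.eSymm i₀ j₀ a₀ b₀]
    exact S.down j₀ i₀ b₀ a₀ hnone)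
  obtain ⟨ca, hca⟩ := Option.ne_none_iff_exists'.mp hva
  obtain ⟨cb, hcb⟩ := Option.ne_none_iff_exists'.mp hvb
  have hmemA : ((i₀, a₀) : Fin r × Fin h) ∈ V1 S := Finset.mem_filter.mpr ⟨Finset.mem_univ _, hva⟩
  have hmemB : ((j₀, b₀) : Fin r × Fin h) ∈ V1 S := Finset.mem_filter.mpr ⟨Finset.mem_univ _, hvb⟩
  have hABne : ((j₀, b₀) : Fin r × Fin h) ≠ (i₀, a₀) := by
    intro hEq
    exact hijne (congrArg Prod.fst hEq).symm
  have hmemB' : ((j₀, b₀) : Fin r × Fin h) ∈ (V1 S).erase (i₀, a₀) :=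
    Finset.mem_erase.mpr ⟨hABne, hmemB⟩
  -- ## local notation
  set V1'' : Finset (Fin r × Fin h) := ((V1 S).erase (i₀, a₀)).erase (j₀, b₀) with hV1''
  set Pint : PMap Ω h → ℝ := fun φ =>
    (∏ q ∈ V2 S, F q (G.eCol q.1 q.2.1 (φ q.1 q.2.2.1) (φ q.2.1 q.2.2.2))) *
      ∏ p ∈ V1 S,
        (if some (G.vCol p.1 (φ p.1 p.2)) = S.vCol p.1 p.2 then (1 : ℝ) else 0) with hPint
  set chi : Ω i₀ × Ω j₀ → ℝ := fun p =>
    if some (G.vCol i₀ p.1) = S.vCol i₀ a₀ ∧ some (G.vCol j₀ p.2) = S.vCol j₀ b₀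
      then (1 : ℝ) else 0 with hchi
  set fpair : Ω i₀ × Ω j₀ → ℝ := fun p =>
    F (i₀, j₀, a₀, b₀) (G.eCol i₀ j₀ p.1 p.2) *
      (if some (G.vCol i₀ p.1) = S.vCol i₀ a₀ ∧ some (G.vCol j₀ p.2) = S.vCol j₀ b₀
        then (1 : ℝ) else 0) with hfpair
  set Iphi : PMap Ω h → ℝ := fun φ =>
    ∏ p ∈ V1'',
      (if some (G.vCol p.1 (φ p.1 p.2)) = S.vCol p.1 p.2 then (1 : ℝ) else 0) with hIphi
  set Rfun : PMap Ω h → Ω i₀ × Ω j₀ → ℝ := fun φ p =>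
    (∏ q ∈ (V2 S).erase (i₀, j₀, a₀, b₀),
      F q (G.eCol q.1 q.2.1 (updV (updV φ j₀ b₀ p.2) i₀ a₀ p.1 q.1 q.2.2.1)
        (updV (updV φ j₀ b₀ p.2) i₀ a₀ p.1 q.2.1 q.2.2.2))) * Iphi φ with hRfun
  -- ## update evaluation
  have hupd_x : ∀ (φ : PMap Ω h) (x : Ω i₀) (y : Ω j₀),
      updV (updV φ j₀ b₀ y) i₀ a₀ x i₀ a₀ = x := fun φ x y => updV_same _ _ _ _
  have hupd_y : ∀ (φ : PMap Ω h) (x : Ω i₀) (y : Ω j₀),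
      updV (updV φ j₀ b₀ y) i₀ a₀ x j₀ b₀ = y := by
    intro φ x y
    rw [updV_ne_i _ _ _ hijne.symm, updV_same]
  have hupd_o : ∀ (φ : PMap Ω h) (x : Ω i₀) (y : Ω j₀) (ii : Fin r) (cc : Fin h),
      ¬(ii = i₀ ∧ cc = a₀) → ¬(ii = j₀ ∧ cc = b₀) →
      updV (updV φ j₀ b₀ y) i₀ a₀ x ii cc = φ ii cc := by
    intro φ x y ii cc hA hB
    by_cases h1 : ii = i₀
    · subst h1
      have hcc : cc ≠ a₀ := fun hc => hA ⟨rfl, hc⟩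
      rw [updV_ne_a _ _ _ hcc, updV_ne_i _ _ _ hijne]
    · rw [updV_ne_i _ _ _ h1]
      by_cases h2 : ii = j₀
      · subst h2
        have hcc : cc ≠ b₀ := fun hc => hB ⟨rfl, hc⟩
        rw [updV_ne_a _ _ _ hcc]
      · rw [updV_ne_i _ _ _ h2]
  -- ## decomposition of the integrand
  have hiteAB : ∀ (A B : Prop),
      ((if A then (1 : ℝ) else 0) * if B then (1 : ℝ) else 0) = if A ∧ B then 1 else 0 := by
    intro A B
    by_cases hA : A <;> by_cases hB : B <;> simp [hA, hB]
  have hdecomp : ∀ (φ : PMap Ω h) (x : Ω i₀) (y : Ω j₀),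
      Pint (updV (updV φ j₀ b₀ y) i₀ a₀ x) = fpair (x, y) * Rfun φ (x, y) := by
    intro φ x y
    rw [hPint]
    dsimp only
    rw [← Finset.mul_prod_erase (V2 S) _ he₀, ← Finset.mul_prod_erase (V1 S) _ hmemA,
      ← Finset.mul_prod_erase ((V1 S).erase (i₀, a₀)) _ hmemB']
    dsimp only
    rw [hupd_x φ x y, hupd_y φ x y]
    have hVrest : ∏ pp ∈ ((V1 S).erase (i₀, a₀)).erase (j₀, b₀),
        (if some (G.vCol pp.1 (updV (updV φ j₀ b₀ y) i₀ a₀ x pp.1 pp.2))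
          = S.vCol pp.1 pp.2 then (1 : ℝ) else 0) = Iphi φ := by
      rw [hIphi]
      dsimp only
      rw [← hV1'']
      refine Finset.prod_congr rfl fun pp hpp => ?_
      have hne1 : pp ≠ (j₀, b₀) := Finset.ne_of_mem_erase (by rw [← hV1'']; exact hpp)
      have hne2 : pp ≠ (i₀, a₀) :=
        Finset.ne_of_mem_erase (Finset.mem_of_mem_erase (by rw [← hV1'']; exact hpp))
      rw [hupd_o φ x y pp.1 pp.2 (fun hc => hne2 (Prod.ext hc.1 hc.2))
        (fun hc => hne1 (Prod.ext hc.1 hc.2))]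
    rw [hVrest, hfpair, hRfun]
    dsimp only
    by_cases hA : some (G.vCol i₀ x) = S.vCol i₀ a₀ <;>
      by_cases hB : some (G.vCol j₀ y) = S.vCol j₀ b₀ <;>
      simp [hA, hB] <;> ring
  -- ## invariance of Rfun w.r.t. frame classes
  have hRinv : ∀ (φ : PMap Ω h) (p q : Ω i₀ × Ω j₀),
      RelK ((regz Ω G φ).vCol i₀) ((regz Ω G φ).vCol j₀) p q → Rfun φ p = Rfun φ q := by
    rintro φ p q ⟨hu, hv⟩
    have hue : ∀ (jj : Fin r) (bb : Fin h), jj ≠ i₀ →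
        G.eCol i₀ jj p.1 (φ jj bb) = G.eCol i₀ jj q.1 (φ jj bb) := by
      intro jj bb hjj
      have h2 := congrFun (congrFun (congrArg Prod.snd hu) jj) bb
      show _
      have h3 : (if jj = i₀ then none else some (G.eCol i₀ jj p.1 (φ jj bb)))
          = (if jj = i₀ then none else some (G.eCol i₀ jj q.1 (φ jj bb))) := h2
      rw [if_neg hjj, if_neg hjj] at h3
      exact Option.some.inj h3
    have hve : ∀ (jj : Fin r) (bb : Fin h), jj ≠ j₀ →
        G.eCol j₀ jj p.2 (φ jj bb) = G.eCol j₀ jj q.2 (φ jj bb) := by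
      intro jj bb hjj
      have h2 := congrFun (congrFun (congrArg Prod.snd hv) jj) bb
      have h3 : (if jj = j₀ then none else some (G.eCol j₀ jj p.2 (φ jj bb)))
          = (if jj = j₀ then none else some (G.eCol j₀ jj q.2 (φ jj bb))) := h2
      rw [if_neg hjj, if_neg hjj] at h3
      exact Option.some.inj h3
    rw [hRfun]
    dsimp only
    congr 1
    refine Finset.prod_congr rfl fun qq hqq => ?_
    obtain ⟨q1, q2, qa, qb⟩ := qq
    have hneq : ((q1, q2, qa, qb) : Fin r × Fin r × Fin h × Fin h) ≠ (i₀, j₀, a₀, b₀) :=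
      Finset.ne_of_mem_erase hqq
    have hlt : q1 < q2 :=
      (Finset.mem_filter.mp (Finset.mem_of_mem_erase hqq)).2.1
    dsimp only
    congr 1
    by_cases hA : q1 = i₀ ∧ qa = a₀
    · obtain ⟨h1, h2⟩ := hA
      rw [h1, h2]
      rw [h1] at hlt
      have hq2i : q2 ≠ i₀ := ne_of_gt hlt
      by_cases hD : q2 = j₀ ∧ qb = b₀
      · exfalso
        apply hneq
        rw [h1, h2, hD.1, hD.2]
      · have hC : ¬(q2 = i₀ ∧ qb = a₀) := fun hc => hq2i hc.1
        rw [hupd_x φ p.1 p.2, hupd_x φ q.1 q.2, hupd_o φ p.1 p.2 q2 qb hC hD,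
          hupd_o φ q.1 q.2 q2 qb hC hD]
        exact hue q2 qb hq2i
    · by_cases hB : q1 = j₀ ∧ qa = b₀
      · obtain ⟨h1, h2⟩ := hB
        rw [h1, h2]
        rw [h1] at hlt
        have hq2j : q2 ≠ j₀ := ne_of_gt hlt
        have hq2i : q2 ≠ i₀ := ne_of_gt (lt_trans hij hlt)
        have hC : ¬(q2 = i₀ ∧ qb = a₀) := fun hc => hq2i hc.1
        have hD : ¬(q2 = j₀ ∧ qb = b₀) := fun hc => hq2j hc.1
        rw [hupd_y φ p.1 p.2, hupd_y φ q.1 q.2, hupd_o φ p.1 p.2 q2 qb hC hD,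
          hupd_o φ q.1 q.2 q2 qb hC hD]
        exact hve q2 qb hq2j
      · have h1st : ∀ (x : Ω i₀) (y : Ω j₀),
            updV (updV φ j₀ b₀ y) i₀ a₀ x q1 qa = φ q1 qa := fun x y =>
          hupd_o φ x y q1 qa hA hB
        rw [h1st p.1 p.2, h1st q.1 q.2]
        by_cases hC : q2 = i₀ ∧ qb = a₀
        · obtain ⟨h1, h2⟩ := hC
          rw [h1, h2]
          rw [h1] at hlt
          have hq1i : q1 ≠ i₀ := ne_of_lt hlt
          rw [hupd_x φ p.1 p.2, hupd_x φ q.1 q.2, G.eSymm q1 i₀ (φ q1 qa) p.1,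
            G.eSymm q1 i₀ (φ q1 qa) q.1]
          exact hue q1 qa hq1i
        · by_cases hD : q2 = j₀ ∧ qb = b₀
          · obtain ⟨h1, h2⟩ := hD
            rw [h1, h2]
            rw [h1] at hlt
            have hq1j : q1 ≠ j₀ := ne_of_lt hlt
            rw [hupd_y φ p.1 p.2, hupd_y φ q.1 q.2, G.eSymm q1 j₀ (φ q1 qa) p.2,
              G.eSymm q1 j₀ (φ q1 qa) q.2]
            exact hve q1 qa hq1j
          · rw [hupd_o φ p.1 p.2 q2 qb hC hD, hupd_o φ q.1 q.2 q2 qb hC hD]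
  -- ## chi and gK
  have hchi01 : ∀ p, chi p = 0 ∨ chi p = 1 := by
    intro p
    rw [hchi]
    by_cases hc : some (G.vCol i₀ p.1) = S.vCol i₀ a₀ ∧ some (G.vCol j₀ p.2) = S.vCol j₀ b₀
    · right; simp [hc]
    · left; simp [hc]
  have hgchi : ∀ (N : ℕ) (ψ : PMap Ω N) (p : Ω i₀ × Ω j₀), chi p = 0 →
      gK w ((regz Ω G ψ).vCol i₀) ((regz Ω G ψ).vCol j₀) fpair p = 0 := by
    intro N ψ p hchip
    have hnum : NumK w ((regz Ω G ψ).vCol i₀) ((regz Ω G ψ).vCol j₀) fpair p = 0 := by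
      refine Finset.sum_eq_zero fun q _ => ?_
      by_cases hq : RelK ((regz Ω G ψ).vCol i₀) ((regz Ω G ψ).vCol j₀) q p
      · rw [if_pos hq]
        have hv1 : G.vCol i₀ q.1 = G.vCol i₀ p.1 := congrArg Prod.fst hq.1
        have hv2 : G.vCol j₀ q.2 = G.vCol j₀ p.2 := congrArg Prod.fst hq.2
        have hcond : ¬(some (G.vCol i₀ p.1) = S.vCol i₀ a₀ ∧
            some (G.vCol j₀ p.2) = S.vCol j₀ b₀) := by
          intro hc
          rw [hchi] at hchip
          simp only [hc, if_true] at hchip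
          exact one_ne_zero hchip
        have hfq : fpair q = 0 := by
          rw [hfpair]
          dsimp only
          rw [hv1, hv2, if_neg hcond, mul_zero]
        rw [hfq, mul_zero]
      · rw [if_neg hq]
    rw [gK, hnum, zero_div]
  -- ## bounds on Rfun, Iphi
  have hIphi_nonneg : ∀ φ, 0 ≤ Iphi φ := by
    intro φ
    rw [hIphi]
    refine Finset.prod_nonneg fun p _ => ?_
    by_cases hc : some (G.vCol p.1 (φ p.1 p.2)) = S.vCol p.1 p.2 <;> simp [hc]
  have hIphi_le_one : ∀ φ, Iphi φ ≤ 1 := by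
    intro φ
    rw [hIphi]
    refine Finset.prod_le_one (fun p _ => ?_) (fun p _ => ?_) <;>
      by_cases hc : some (G.vCol p.1 (φ p.1 p.2)) = S.vCol p.1 p.2 <;> simp [hc]
  have hRle : ∀ φ p, |Rfun φ p| ≤ Iphi φ := by
    intro φ p
    rw [hRfun]
    dsimp only
    rw [abs_mul, abs_of_nonneg (hIphi_nonneg φ)]
    refine mul_le_of_le_one_left (hIphi_nonneg φ) ?_
    rw [Finset.abs_prod]
    exact Finset.prod_le_one (fun q _ => abs_nonneg _)
      (fun q hq => hF q (Finset.mem_of_mem_erase hq) _ (G.eMem _ _ _ _))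
  have hWnn : ∀ {N : ℕ} (ψ : PMap Ω N), 0 ≤ pmapWeight Ω w ψ := by
    intro N ψ
    exact Finset.prod_nonneg fun i _ => Finset.prod_nonneg fun a _ => hw _ _
  -- ## factorization identities
  have hsumW : ∀ (N : ℕ), ∑ ψ : PMap Ω N, pmapWeight Ω w ψ = 1 := by
    intro N
    unfold pmapWeight
    rw [sum_pmap_prod (fun i (_ : Fin N) (z : Ω i) => w i z)]
    simp [htot]
  have hsumWI : ∑ φ : PMap Ω h, pmapWeight Ω w φ * Iphi φ = ∏ p ∈ V1'', dVS Ω w G S p := by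
    have h1 : ∀ φ : PMap Ω h, pmapWeight Ω w φ * Iphi φ
        = ∏ i, ∏ a, (w i (φ i a) * (if (i, a) ∈ V1'' then
            (if some (G.vCol i (φ i a)) = S.vCol i a then (1 : ℝ) else 0) else 1)) := by
      intro φ
      rw [Finset.prod_congr rfl fun i _ => Finset.prod_mul_distrib, Finset.prod_mul_distrib]
      congr 1
      rw [hIphi]
      dsimp only
      calc ∏ p ∈ V1'', (if some (G.vCol p.1 (φ p.1 p.2)) = S.vCol p.1 p.2 then (1 : ℝ) else 0)
          = ∏ p ∈ Finset.univ ∩ V1'',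
              (if some (G.vCol p.1 (φ p.1 p.2)) = S.vCol p.1 p.2 then (1 : ℝ) else 0) := by
            rw [Finset.univ_inter]
        _ = ∏ p : Fin r × Fin h, (if p ∈ V1'' then
              (if some (G.vCol p.1 (φ p.1 p.2)) = S.vCol p.1 p.2 then (1 : ℝ) else 0) else 1) :=
            (Finset.prod_ite_mem _ _ _).symm
        _ = ∏ i, ∏ a, (if (i, a) ∈ V1'' then
              (if some (G.vCol i (φ i a)) = S.vCol i a then (1 : ℝ) else 0) else 1) :=
            Fintype.prod_prod_type (fun p : Fin r × Fin h => if p ∈ V1'' then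
              (if some (G.vCol p.1 (φ p.1 p.2)) = S.vCol p.1 p.2 then (1 : ℝ) else 0) else 1)
    rw [Finset.sum_congr rfl fun φ _ => h1 φ,
      sum_pmap_prod (fun i a z => w i z * (if (i, a) ∈ V1'' then
        (if some (G.vCol i z) = S.vCol i a then (1 : ℝ) else 0) else 1))]
    have h2 : ∀ (i : Fin r) (a : Fin h),
        (∑ z : Ω i, w i z * (if (i, a) ∈ V1'' then
          (if some (G.vCol i z) = S.vCol i a then (1 : ℝ) else 0) else 1))
        = (if (i, a) ∈ V1'' then dVS Ω w G S (i, a) else 1) := by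
      intro i a
      by_cases hmem : (i, a) ∈ V1''
      · rw [if_pos hmem]
        have hmm : (i, a) ∈ ((V1 S).erase (i₀, a₀)).erase (j₀, b₀) := by
          rw [← hV1'']
          exact hmem
        have hvis : S.vCol i a ≠ none :=
          (Finset.mem_filter.mp (Finset.mem_of_mem_erase (Finset.mem_of_mem_erase hmm))).2
        obtain ⟨c, hc⟩ := Option.ne_none_iff_exists'.mp hvis
        have hd : dVS Ω w G S (i, a) = dV Ω w G i c := by simp [dVS, hc]
        rw [hd, dV]
        refine Finset.sum_congr rfl fun z _ => ?_
        rw [if_pos hmem, hc]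
        by_cases hz : G.vCol i z = c
        · simp [hz]
        · simp [hz]
      · rw [if_neg hmem]
        calc ∑ z : Ω i, w i z * (if (i, a) ∈ V1'' then
              (if some (G.vCol i z) = S.vCol i a then (1 : ℝ) else 0) else 1)
            = ∑ z : Ω i, w i z := Finset.sum_congr rfl fun z _ => by
              rw [if_neg hmem, mul_one]
          _ = 1 := htot i
    rw [Finset.prod_congr rfl fun i _ => Finset.prod_congr rfl fun a _ => h2 i a]
    calc ∏ i, ∏ a, (if (i, a) ∈ V1'' then dVS Ω w G S (i, a) else 1)
        = ∏ p : Fin r × Fin h, (if p ∈ V1'' then dVS Ω w G S p else 1) :=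
          (Fintype.prod_prod_type (fun p : Fin r × Fin h =>
            if p ∈ V1'' then dVS Ω w G S p else 1)).symm
      _ = ∏ p ∈ Finset.univ ∩ V1'', dVS Ω w G S p := Finset.prod_ite_mem _ _ _
      _ = ∏ p ∈ V1'', dVS Ω w G S p := by rw [Finset.univ_inter]
  have hdvsA : dVS Ω w G S (i₀, a₀) = dV Ω w G i₀ ca := by simp [dVS, hca]
  have hdvsB : dVS Ω w G S (j₀, b₀) = dV Ω w G j₀ cb := by simp [dVS, hcb]
  have hsumvA : ∑ x : Ω i₀, w i₀ x * (if some (G.vCol i₀ x) = S.vCol i₀ a₀ then (1 : ℝ) else 0)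
      = dVS Ω w G S (i₀, a₀) := by
    rw [hdvsA, dV]
    refine Finset.sum_congr rfl fun z _ => ?_
    rw [hca]
    by_cases hz : G.vCol i₀ z = ca
    · simp [hz]
    · simp [hz]
  have hsumvB : ∑ y : Ω j₀, w j₀ y * (if some (G.vCol j₀ y) = S.vCol j₀ b₀ then (1 : ℝ) else 0)
      = dVS Ω w G S (j₀, b₀) := by
    rw [hdvsB, dV]
    refine Finset.sum_congr rfl fun z _ => ?_
    rw [hcb]
    by_cases hz : G.vCol j₀ z = cb
    · simp [hz]
    · simp [hz]
  have hchiSum : ∑ p : Ω i₀ × Ω j₀, wwK w p * chi p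
      = dVS Ω w G S (i₀, a₀) * dVS Ω w G S (j₀, b₀) := by
    rw [Fintype.sum_prod_type]
    calc ∑ x : Ω i₀, ∑ y : Ω j₀, wwK w (x, y) * chi (x, y)
        = ∑ x : Ω i₀, ∑ y : Ω j₀,
            (w i₀ x * (if some (G.vCol i₀ x) = S.vCol i₀ a₀ then (1 : ℝ) else 0)) *
            (w j₀ y * (if some (G.vCol j₀ y) = S.vCol j₀ b₀ then (1 : ℝ) else 0)) := by
          refine Finset.sum_congr rfl fun x _ => Finset.sum_congr rfl fun y _ => ?_
          simp only [hchi, wwK]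
          by_cases hA : some (G.vCol i₀ x) = S.vCol i₀ a₀ <;>
            by_cases hB : some (G.vCol j₀ y) = S.vCol j₀ b₀ <;>
            simp [hA, hB] <;> ring
      _ = (∑ x : Ω i₀, w i₀ x * (if some (G.vCol i₀ x) = S.vCol i₀ a₀ then (1 : ℝ) else 0)) *
          (∑ y : Ω j₀, w j₀ y * (if some (G.vCol j₀ y) = S.vCol j₀ b₀ then (1 : ℝ) else 0)) :=
          (Finset.sum_mul_sum _ _ _ _).symm
      _ = dVS Ω w G S (i₀, a₀) * dVS Ω w G S (j₀, b₀) := by rw [hsumvA, hsumvB]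
  -- ## Step 1 : rewriting the LHS expectation
  have hstep1 : EPhi Ω w h Pint = ∑ φ : PMap Ω h, pmapWeight Ω w φ *
      ∑ p : Ω i₀ × Ω j₀, wwK w p *
        gK w ((regz Ω G φ).vCol i₀) ((regz Ω G φ).vCol j₀) fpair p * Rfun φ p := by
    show ∑ φ : PMap Ω h, pmapWeight Ω w φ * Pint φ = _
    rw [resum w htot i₀ a₀ Pint,
      resum w htot j₀ b₀ (fun φ => ∑ x : Ω i₀, w i₀ x * Pint (updV φ i₀ a₀ x))]
    refine Finset.sum_congr rfl fun φ _ => ?_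
    congr 1
    rw [← pullK w ((regz Ω G φ).vCol i₀) ((regz Ω G φ).vCol j₀) hw fpair (Rfun φ) (hRinv φ)]
    calc ∑ y : Ω j₀, w j₀ y *
          ∑ x : Ω i₀, w i₀ x * Pint (updV (updV φ j₀ b₀ y) i₀ a₀ x)
        = ∑ y : Ω j₀, ∑ x : Ω i₀,
            w j₀ y * (w i₀ x * (fpair (x, y) * Rfun φ (x, y))) := by
          refine Finset.sum_congr rfl fun y _ => ?_
          rw [Finset.mul_sum]
          refine Finset.sum_congr rfl fun x _ => ?_
          rw [hdecomp φ x y]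
      _ = ∑ x : Ω i₀, ∑ y : Ω j₀,
            w j₀ y * (w i₀ x * (fpair (x, y) * Rfun φ (x, y))) := Finset.sum_comm
      _ = ∑ x : Ω i₀, ∑ y : Ω j₀, wwK w (x, y) * fpair (x, y) * Rfun φ (x, y) := by
          refine Finset.sum_congr rfl fun x _ => Finset.sum_congr rfl fun y _ => ?_
          rw [wwK]
          ring
      _ = ∑ p : Ω i₀ × Ω j₀, wwK w p * fpair p * Rfun φ p :=
          (Fintype.sum_prod_type (fun p : Ω i₀ × Ω j₀ => wwK w p * fpair p * Rfun φ p)).symm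
  -- ## Step 1 : Cauchy-Schwarz
  set T' : ℝ := ∑ φ : PMap Ω h, pmapWeight Ω w φ *
    (Iphi φ * QK w ((regz Ω G φ).vCol i₀) ((regz Ω G φ).vCol j₀) fpair) with hT'
  set Dpp : ℝ := ∑ φ : PMap Ω h, pmapWeight Ω w φ * Iphi φ with hDpp
  have hchinn : ∀ p, 0 ≤ chi p := fun p => by
    rcases hchi01 p with h0 | h1
    · rw [h0]
    · rw [h1]
      norm_num
  have hCS : EPhi Ω w h Pint ^ 2
      ≤ (Dpp * (dVS Ω w G S (i₀, a₀) * dVS Ω w G S (j₀, b₀))) * T' := by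
    set gphi : PMap Ω h → Ω i₀ × Ω j₀ → ℝ := fun φ p =>
      gK w ((regz Ω G φ).vCol i₀) ((regz Ω G φ).vCol j₀) fpair p with hgphi
    set A : PMap Ω h × (Ω i₀ × Ω j₀) → ℝ := fun z =>
      pmapWeight Ω w z.1 * Iphi z.1 * (wwK w z.2 * chi z.2) with hA
    have hAnn : ∀ z, 0 ≤ A z := fun z => by
      rw [hA]
      exact mul_nonneg (mul_nonneg (hWnn _) (hIphi_nonneg _))
        (mul_nonneg (wwK_nonneg w hw _) (hchinn _))
    have habs : |EPhi Ω w h Pint| ≤ ∑ z : PMap Ω h × (Ω i₀ × Ω j₀), A z * |gphi z.1 z.2| := by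
      rw [hstep1]
      calc |∑ φ : PMap Ω h, pmapWeight Ω w φ *
            ∑ p : Ω i₀ × Ω j₀, wwK w p * gphi φ p * Rfun φ p|
          ≤ ∑ φ : PMap Ω h, |pmapWeight Ω w φ *
            ∑ p : Ω i₀ × Ω j₀, wwK w p * gphi φ p * Rfun φ p| :=
            Finset.abs_sum_le_sum_abs _ _
        _ ≤ ∑ φ : PMap Ω h, pmapWeight Ω w φ *
            ∑ p : Ω i₀ × Ω j₀, wwK w p * chi p * Iphi φ * |gphi φ p| := by
            refine Finset.sum_le_sum fun φ _ => ?_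
            rw [abs_mul, abs_of_nonneg (hWnn φ)]
            refine mul_le_mul_of_nonneg_left ?_ (hWnn φ)
            calc |∑ p : Ω i₀ × Ω j₀, wwK w p * gphi φ p * Rfun φ p|
                ≤ ∑ p : Ω i₀ × Ω j₀, |wwK w p * gphi φ p * Rfun φ p| :=
                  Finset.abs_sum_le_sum_abs _ _
              _ ≤ ∑ p : Ω i₀ × Ω j₀, wwK w p * chi p * Iphi φ * |gphi φ p| := by
                  refine Finset.sum_le_sum fun p _ => ?_
                  rw [abs_mul, abs_mul, abs_of_nonneg (wwK_nonneg w hw p)]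
                  rcases hchi01 p with h0 | h1
                  · have hg0 : gphi φ p = 0 := hgchi h φ p h0
                    rw [hg0, h0]
                    simp
                  · rw [h1]
                    calc wwK w p * |gphi φ p| * |Rfun φ p|
                        ≤ wwK w p * |gphi φ p| * Iphi φ :=
                          mul_le_mul_of_nonneg_left (hRle φ p)
                            (mul_nonneg (wwK_nonneg w hw p) (abs_nonneg _))
                      _ = wwK w p * 1 * Iphi φ * |gphi φ p| := by ring
        _ = ∑ z : PMap Ω h × (Ω i₀ × Ω j₀), A z * |gphi z.1 z.2| := by
            rw [Fintype.sum_prod_type (fun z : PMap Ω h × (Ω i₀ × Ω j₀) => A z * |gphi z.1 z.2|)]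
            refine Finset.sum_congr rfl fun φ _ => ?_
            rw [Finset.mul_sum]
            refine Finset.sum_congr rfl fun p _ => ?_
            rw [hA]
            dsimp only
            ring
    have hcs2 : (∑ z : PMap Ω h × (Ω i₀ × Ω j₀), A z * |gphi z.1 z.2|) ^ 2
        ≤ (∑ z : PMap Ω h × (Ω i₀ × Ω j₀), A z) *
          ∑ z : PMap Ω h × (Ω i₀ × Ω j₀), A z * gphi z.1 z.2 ^ 2 := by
      have h1 : ∀ z : PMap Ω h × (Ω i₀ × Ω j₀), A z * |gphi z.1 z.2|
          = Real.sqrt (A z) * (Real.sqrt (A z) * |gphi z.1 z.2|) := fun z => by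
        rw [← mul_assoc, Real.mul_self_sqrt (hAnn z)]
      rw [Finset.sum_congr rfl fun z _ => h1 z]
      calc (∑ z : PMap Ω h × (Ω i₀ × Ω j₀),
            Real.sqrt (A z) * (Real.sqrt (A z) * |gphi z.1 z.2|)) ^ 2
          ≤ (∑ z : PMap Ω h × (Ω i₀ × Ω j₀), Real.sqrt (A z) ^ 2) *
            ∑ z : PMap Ω h × (Ω i₀ × Ω j₀), (Real.sqrt (A z) * |gphi z.1 z.2|) ^ 2 :=
            Finset.sum_mul_sq_le_sq_mul_sq _ _ _
        _ = (∑ z : PMap Ω h × (Ω i₀ × Ω j₀), A z) *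
            ∑ z : PMap Ω h × (Ω i₀ × Ω j₀), A z * gphi z.1 z.2 ^ 2 := by
            congr 1
            · exact Finset.sum_congr rfl fun z _ => Real.sq_sqrt (hAnn z)
            · refine Finset.sum_congr rfl fun z _ => ?_
              rw [mul_pow, Real.sq_sqrt (hAnn z), sq_abs]
    have hsumA : ∑ z : PMap Ω h × (Ω i₀ × Ω j₀), A z
        = Dpp * (dVS Ω w G S (i₀, a₀) * dVS Ω w G S (j₀, b₀)) := by
      rw [Fintype.sum_prod_type (fun z : PMap Ω h × (Ω i₀ × Ω j₀) => A z)]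
      calc ∑ φ : PMap Ω h, ∑ p : Ω i₀ × Ω j₀, A (φ, p)
          = ∑ φ : PMap Ω h, ∑ p : Ω i₀ × Ω j₀,
              (pmapWeight Ω w φ * Iphi φ) * (wwK w p * chi p) :=
            Finset.sum_congr rfl fun φ _ => Finset.sum_congr rfl fun p _ => by rw [hA]
        _ = (∑ φ : PMap Ω h, pmapWeight Ω w φ * Iphi φ) *
            ∑ p : Ω i₀ × Ω j₀, wwK w p * chi p :=
            (Finset.sum_mul_sum _ _ _ _).symm
        _ = Dpp * (dVS Ω w G S (i₀, a₀) * dVS Ω w G S (j₀, b₀)) := by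
            rw [hchiSum, ← hDpp]
    have hsumAg : ∑ z : PMap Ω h × (Ω i₀ × Ω j₀), A z * gphi z.1 z.2 ^ 2 ≤ T' := by
      rw [Fintype.sum_prod_type
        (fun z : PMap Ω h × (Ω i₀ × Ω j₀) => A z * gphi z.1 z.2 ^ 2), hT']
      refine Finset.sum_le_sum fun φ _ => ?_
      calc ∑ p : Ω i₀ × Ω j₀, A (φ, p) * gphi φ p ^ 2
          = ∑ p : Ω i₀ × Ω j₀,
              (pmapWeight Ω w φ * Iphi φ) * (wwK w p * (chi p * gphi φ p ^ 2)) :=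
            Finset.sum_congr rfl fun p _ => by
              rw [hA]
              dsimp only
              ring
        _ = (pmapWeight Ω w φ * Iphi φ) *
            ∑ p : Ω i₀ × Ω j₀, wwK w p * (chi p * gphi φ p ^ 2) :=
            (Finset.mul_sum _ _ _).symm
        _ ≤ (pmapWeight Ω w φ * Iphi φ) *
            ∑ p : Ω i₀ × Ω j₀, wwK w p * gphi φ p ^ 2 := by
            refine mul_le_mul_of_nonneg_left ?_ (mul_nonneg (hWnn φ) (hIphi_nonneg φ))
            refine Finset.sum_le_sum fun p _ => ?_
            refine mul_le_mul_of_nonneg_left ?_ (wwK_nonneg w hw p)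
            rcases hchi01 p with h0 | h1
            · rw [h0, zero_mul]
              positivity
            · rw [h1, one_mul]
        _ = pmapWeight Ω w φ *
            (Iphi φ * QK w ((regz Ω G φ).vCol i₀) ((regz Ω G φ).vCol j₀) fpair) := by
            rw [QK_def, hgphi]
            ring
    calc EPhi Ω w h Pint ^ 2 = |EPhi Ω w h Pint| ^ 2 := (sq_abs _).symm
      _ ≤ (∑ z : PMap Ω h × (Ω i₀ × Ω j₀), A z * |gphi z.1 z.2|) ^ 2 :=
          pow_le_pow_left₀ (abs_nonneg _) habs 2
      _ ≤ (∑ z : PMap Ω h × (Ω i₀ × Ω j₀), A z) *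
          ∑ z : PMap Ω h × (Ω i₀ × Ω j₀), A z * gphi z.1 z.2 ^ 2 := hcs2
      _ ≤ (∑ z : PMap Ω h × (Ω i₀ × Ω j₀), A z) * T' :=
          mul_le_mul_of_nonneg_left hsumAg (Finset.sum_nonneg fun z _ => hAnn z)
      _ = (Dpp * (dVS Ω w G S (i₀, a₀) * dVS Ω w G S (j₀, b₀))) * T' := by rw [hsumA]
  -- ## Step 2 : block argument
  set Epsi : ℝ := ∑ ψ : PMap Ω (m * h), pmapWeight Ω w ψ *
    QK w ((regz Ω G ψ).vCol i₀) ((regz Ω G ψ).vCol j₀) fpair with hEpsi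
  have hT'nn : 0 ≤ T' := by
    rw [hT']
    refine Finset.sum_nonneg fun φ _ => mul_nonneg (hWnn φ) (mul_nonneg (hIphi_nonneg φ)
      (QK_nonneg w _ _ hw fpair))
  have hEpsinn : 0 ≤ Epsi := by
    rw [hEpsi]
    exact Finset.sum_nonneg fun ψ _ => mul_nonneg (hWnn ψ) (QK_nonneg w _ _ hw fpair)
  have hDpp0 : 0 ≤ Dpp := by
    rw [hDpp]
    exact Finset.sum_nonneg fun φ _ => mul_nonneg (hWnn φ) (hIphi_nonneg φ)
  have hDpp1 : Dpp ≤ 1 := by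
    rw [hDpp, ← hsumW h]
    exact Finset.sum_le_sum fun φ _ => by
      calc pmapWeight Ω w φ * Iphi φ ≤ pmapWeight Ω w φ * 1 :=
            mul_le_mul_of_nonneg_left (hIphi_le_one φ) (hWnn φ)
        _ = pmapWeight Ω w φ := mul_one _
  have hstep2 : T' ≤ (Dpp + 1 / (m : ℝ)) * Epsi := by
    have hmpos : (0 : ℝ) < (m : ℝ) := by
      exact_mod_cast Nat.lt_of_lt_of_le Nat.zero_lt_one hm
    -- refinement from the full sample map to a block
    have href : ∀ (ψ : PMap Ω (m * h)) (k : Fin m) (p q : Ω i₀ × Ω j₀),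
        RelK ((regz Ω G ψ).vCol i₀) ((regz Ω G ψ).vCol j₀) p q →
        RelK ((regz Ω G (blockMap m h ψ k)).vCol i₀)
          ((regz Ω G (blockMap m h ψ k)).vCol j₀) p q := by
      rintro ψ k p q ⟨hu, hv⟩
      constructor
      · have h1 : G.vCol i₀ p.1 = G.vCol i₀ q.1 := congrArg Prod.fst hu
        refine Prod.ext h1 ?_
        funext jj bb
        show (if jj = i₀ then none
            else some (G.eCol i₀ jj p.1 (blockMap m h ψ k jj bb)))
          = (if jj = i₀ then none
            else some (G.eCol i₀ jj q.1 (blockMap m h ψ k jj bb)))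
        by_cases hjj : jj = i₀
        · rw [if_pos hjj, if_pos hjj]
        · have h2 : (if jj = i₀ then none
              else some (G.eCol i₀ jj p.1 (ψ jj (finProdFinEquiv (k, bb)))))
              = (if jj = i₀ then none
              else some (G.eCol i₀ jj q.1 (ψ jj (finProdFinEquiv (k, bb))))) :=
            congrFun (congrFun (congrArg Prod.snd hu) jj) (finProdFinEquiv (k, bb))
          rw [if_neg hjj, if_neg hjj] at h2 ⊢
          exact h2
      · have h1 : G.vCol j₀ p.2 = G.vCol j₀ q.2 := congrArg Prod.fst hv
        refine Prod.ext h1 ?_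
        funext jj bb
        show (if jj = j₀ then none
            else some (G.eCol j₀ jj p.2 (blockMap m h ψ k jj bb)))
          = (if jj = j₀ then none
            else some (G.eCol j₀ jj q.2 (blockMap m h ψ k jj bb)))
        by_cases hjj : jj = j₀
        · rw [if_pos hjj, if_pos hjj]
        · have h2 : (if jj = j₀ then none
              else some (G.eCol j₀ jj p.2 (ψ jj (finProdFinEquiv (k, bb)))))
              = (if jj = j₀ then none
              else some (G.eCol j₀ jj q.2 (ψ jj (finProdFinEquiv (k, bb))))) :=
            congrFun (congrFun (congrArg Prod.snd hv) jj) (finProdFinEquiv (k, bb))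
          rw [if_neg hjj, if_neg hjj] at h2 ⊢
          exact h2
    -- reindex Epsi over blocks
    have hEblocks : Epsi = ∑ ρ : Fin m → PMap Ω h, (∏ k, pmapWeight Ω w (ρ k)) *
        QK w ((regz Ω G ((blockEquiv (Ω := Ω) m h).symm ρ)).vCol i₀)
          ((regz Ω G ((blockEquiv (Ω := Ω) m h).symm ρ)).vCol j₀) fpair := by
      rw [hEpsi, ← Equiv.sum_comp ((blockEquiv (Ω := Ω) m h).symm)
        (fun ψ => pmapWeight Ω w ψ *
          QK w ((regz Ω G ψ).vCol i₀) ((regz Ω G ψ).vCol j₀) fpair)]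
      exact Finset.sum_congr rfl fun ρ _ => by rw [pmapWeight_blocks]
    set Tf : Fin m → Fin m → PMap Ω h → ℝ := fun k l σ =>
      pmapWeight Ω w σ * (if l < k then 1 - Iphi σ else if l = k then
        Iphi σ * QK w ((regz Ω G σ).vCol i₀) ((regz Ω G σ).vCol j₀) fpair else 1) with hTf
    -- pointwise lower bound
    have hperρ : ∀ ρ : Fin m → PMap Ω h,
        ∑ k : Fin m, ∏ l : Fin m, Tf k l (ρ l)
          ≤ (∏ k, pmapWeight Ω w (ρ k)) *
            QK w ((regz Ω G ((blockEquiv (Ω := Ω) m h).symm ρ)).vCol i₀)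
              ((regz Ω G ((blockEquiv (Ω := Ω) m h).symm ρ)).vCol j₀) fpair := by
      intro ρ
      have hprod : ∀ k : Fin m, ∏ l : Fin m, Tf k l (ρ l)
          = (∏ l, pmapWeight Ω w (ρ l)) *
            ((∏ l ∈ Finset.Iio k, (1 - Iphi (ρ l))) *
              (Iphi (ρ k) *
                QK w ((regz Ω G (ρ k)).vCol i₀) ((regz Ω G (ρ k)).vCol j₀) fpair)) := by
        intro k
        rw [hTf]
        dsimp only
        rw [Finset.prod_mul_distrib]
        congr 1
        exact prod_ite_lt k _ _
      have hQKb : ∀ k : Fin m,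
          QK w ((regz Ω G (ρ k)).vCol i₀) ((regz Ω G (ρ k)).vCol j₀) fpair
            ≤ QK w ((regz Ω G ((blockEquiv (Ω := Ω) m h).symm ρ)).vCol i₀)
              ((regz Ω G ((blockEquiv (Ω := Ω) m h).symm ρ)).vCol j₀) fpair := by
        intro k
        rw [← blockMap_symm m h ρ k]
        exact QK_le_QK w _ _ hw _ _ (href ((blockEquiv (Ω := Ω) m h).symm ρ) k) fpair
      have hFSnn : ∀ k : Fin m, 0 ≤ (∏ l ∈ Finset.Iio k, (1 - Iphi (ρ l))) * Iphi (ρ k) :=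
        fun k => mul_nonneg (Finset.prod_nonneg fun l _ => by linarith [hIphi_le_one (ρ l)])
          (hIphi_nonneg (ρ k))
      have hFSle : ∑ k : Fin m, (∏ l ∈ Finset.Iio k, (1 - Iphi (ρ l))) * Iphi (ρ k) ≤ 1 :=
        fin_fs_le_one (fun l => Iphi (ρ l)) (fun l => hIphi_le_one (ρ l))
      have hQKψnn : 0 ≤ QK w ((regz Ω G ((blockEquiv (Ω := Ω) m h).symm ρ)).vCol i₀)
          ((regz Ω G ((blockEquiv (Ω := Ω) m h).symm ρ)).vCol j₀) fpair :=
        QK_nonneg w _ _ hw fpair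
      calc ∑ k : Fin m, ∏ l : Fin m, Tf k l (ρ l)
          = ∑ k : Fin m, (∏ l, pmapWeight Ω w (ρ l)) *
              ((∏ l ∈ Finset.Iio k, (1 - Iphi (ρ l))) *
                (Iphi (ρ k) *
                  QK w ((regz Ω G (ρ k)).vCol i₀) ((regz Ω G (ρ k)).vCol j₀) fpair)) :=
            Finset.sum_congr rfl fun k _ => hprod k
        _ ≤ ∑ k : Fin m, ((∏ l, pmapWeight Ω w (ρ l)) *
              QK w ((regz Ω G ((blockEquiv (Ω := Ω) m h).symm ρ)).vCol i₀)
                ((regz Ω G ((blockEquiv (Ω := Ω) m h).symm ρ)).vCol j₀) fpair) *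
              ((∏ l ∈ Finset.Iio k, (1 - Iphi (ρ l))) * Iphi (ρ k)) := by
            refine Finset.sum_le_sum fun k _ => ?_
            have hWpnn : 0 ≤ ∏ l, pmapWeight Ω w (ρ l) :=
              Finset.prod_nonneg fun l _ => hWnn (ρ l)
            calc (∏ l, pmapWeight Ω w (ρ l)) *
                ((∏ l ∈ Finset.Iio k, (1 - Iphi (ρ l))) *
                  (Iphi (ρ k) *
                    QK w ((regz Ω G (ρ k)).vCol i₀) ((regz Ω G (ρ k)).vCol j₀) fpair))
                = ((∏ l, pmapWeight Ω w (ρ l)) *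
                    ((∏ l ∈ Finset.Iio k, (1 - Iphi (ρ l))) * Iphi (ρ k))) *
                  QK w ((regz Ω G (ρ k)).vCol i₀) ((regz Ω G (ρ k)).vCol j₀) fpair := by
                  ring
              _ ≤ ((∏ l, pmapWeight Ω w (ρ l)) *
                    ((∏ l ∈ Finset.Iio k, (1 - Iphi (ρ l))) * Iphi (ρ k))) *
                  QK w ((regz Ω G ((blockEquiv (Ω := Ω) m h).symm ρ)).vCol i₀)
                    ((regz Ω G ((blockEquiv (Ω := Ω) m h).symm ρ)).vCol j₀) fpair :=
                  mul_le_mul_of_nonneg_left (hQKb k)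
                    (mul_nonneg hWpnn (hFSnn k))
              _ = ((∏ l, pmapWeight Ω w (ρ l)) *
                    QK w ((regz Ω G ((blockEquiv (Ω := Ω) m h).symm ρ)).vCol i₀)
                      ((regz Ω G ((blockEquiv (Ω := Ω) m h).symm ρ)).vCol j₀) fpair) *
                  ((∏ l ∈ Finset.Iio k, (1 - Iphi (ρ l))) * Iphi (ρ k)) := by
                  ring
        _ = ((∏ l, pmapWeight Ω w (ρ l)) *
              QK w ((regz Ω G ((blockEquiv (Ω := Ω) m h).symm ρ)).vCol i₀)
                ((regz Ω G ((blockEquiv (Ω := Ω) m h).symm ρ)).vCol j₀) fpair) *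
            ∑ k : Fin m, (∏ l ∈ Finset.Iio k, (1 - Iphi (ρ l))) * Iphi (ρ k) :=
            (Finset.mul_sum _ _ _).symm
        _ ≤ ((∏ l, pmapWeight Ω w (ρ l)) *
              QK w ((regz Ω G ((blockEquiv (Ω := Ω) m h).symm ρ)).vCol i₀)
                ((regz Ω G ((blockEquiv (Ω := Ω) m h).symm ρ)).vCol j₀) fpair) * 1 := by
            refine mul_le_mul_of_nonneg_left hFSle ?_
            exact mul_nonneg (Finset.prod_nonneg fun l _ => hWnn (ρ l)) hQKψnn
        _ = (∏ k, pmapWeight Ω w (ρ k)) *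
              QK w ((regz Ω G ((blockEquiv (Ω := Ω) m h).symm ρ)).vCol i₀)
                ((regz Ω G ((blockEquiv (Ω := Ω) m h).symm ρ)).vCol j₀) fpair := by
            rw [mul_one]
    -- factorized value of each first-success term
    have hsum_k : ∀ k : Fin m, ∑ ρ : Fin m → PMap Ω h, ∏ l : Fin m, Tf k l (ρ l)
        = (1 - Dpp) ^ (k : ℕ) * T' := by
      intro k
      rw [sum_pi_prod (δ := fun _ : Fin m => PMap Ω h) (fun l σ => Tf k l σ)]
      have hval : ∀ l : Fin m, (∑ σ : PMap Ω h, Tf k l σ)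
          = (if l < k then 1 - Dpp else if l = k then T' else 1) := by
        intro l
        by_cases h1 : l < k
        · rw [if_pos h1]
          rw [hTf]
          dsimp only
          simp only [if_pos h1]
          calc ∑ σ : PMap Ω h, pmapWeight Ω w σ * (1 - Iphi σ)
              = ∑ σ : PMap Ω h, (pmapWeight Ω w σ - pmapWeight Ω w σ * Iphi σ) :=
                Finset.sum_congr rfl fun σ _ => by ring
            _ = (∑ σ : PMap Ω h, pmapWeight Ω w σ) -
                ∑ σ : PMap Ω h, pmapWeight Ω w σ * Iphi σ := Finset.sum_sub_distrib _ _
            _ = 1 - Dpp := by rw [hsumW h, ← hDpp]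
        · by_cases h2 : l = k
          · rw [if_neg h1, if_pos h2, hTf]
            dsimp only
            simp only [if_neg h1, if_pos h2]
            try rw [hT']
            try rfl
          · rw [if_neg h1, if_neg h2, hTf]
            dsimp only
            simp only [if_neg h1, if_neg h2]
            calc ∑ σ : PMap Ω h, pmapWeight Ω w σ * 1
                = ∑ σ : PMap Ω h, pmapWeight Ω w σ :=
                  Finset.sum_congr rfl fun σ _ => by rw [mul_one]
              _ = 1 := hsumW h
      rw [Finset.prod_congr rfl fun l _ => hval l,
        prod_ite_lt k (fun _ => 1 - Dpp) (fun _ => T'), Finset.prod_const, Fin.card_Iio]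
    -- lower bound for Epsi
    have hlower : (∑ n ∈ Finset.range m, (1 - Dpp) ^ n) * T' ≤ Epsi := by
      rw [hEblocks]
      calc (∑ n ∈ Finset.range m, (1 - Dpp) ^ n) * T'
          = ∑ n ∈ Finset.range m, (1 - Dpp) ^ n * T' := Finset.sum_mul _ _ _
        _ = ∑ k : Fin m, (1 - Dpp) ^ (k : ℕ) * T' :=
            (Fin.sum_univ_eq_sum_range (fun n => (1 - Dpp) ^ n * T') m).symm
        _ = ∑ k : Fin m, ∑ ρ : Fin m → PMap Ω h, ∏ l : Fin m, Tf k l (ρ l) :=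
            Finset.sum_congr rfl fun k _ => (hsum_k k).symm
        _ = ∑ ρ : Fin m → PMap Ω h, ∑ k : Fin m, ∏ l : Fin m, Tf k l (ρ l) :=
            Finset.sum_comm
        _ ≤ ∑ ρ : Fin m → PMap Ω h, (∏ k, pmapWeight Ω w (ρ k)) *
              QK w ((regz Ω G ((blockEquiv (Ω := Ω) m h).symm ρ)).vCol i₀)
                ((regz Ω G ((blockEquiv (Ω := Ω) m h).symm ρ)).vCol j₀) fpair :=
            Finset.sum_le_sum fun ρ _ => hperρ ρ
    -- scalar estimate
    have hglow := geom_lower Dpp hDpp0 hDpp1 m hm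
    calc T' = 1 * T' := (one_mul _).symm
      _ ≤ ((Dpp + 1 / (m : ℝ)) * ∑ n ∈ Finset.range m, (1 - Dpp) ^ n) * T' :=
          mul_le_mul_of_nonneg_right hglow hT'nn
      _ = (Dpp + 1 / (m : ℝ)) * ((∑ n ∈ Finset.range m, (1 - Dpp) ^ n) * T') := by ring
      _ ≤ (Dpp + 1 / (m : ℝ)) * Epsi := by
          refine mul_le_mul_of_nonneg_left hlower ?_
          positivity
  -- ## RHS identification
  have hRHS : (EPhi Ω w (m * h) fun ψ =>
      ∑ x' : Ω i₀, ∑ y' : Ω j₀, w i₀ x' * w j₀ y' *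
        (condEE Ω w i₀ j₀ (fun x y => frameRel Ω G ψ i₀ j₀ x y x' y')
          (fun x y => F (i₀, j₀, a₀, b₀) (G.eCol i₀ j₀ x y) *
            (if some (G.vCol i₀ x) = S.vCol i₀ a₀ ∧
                some (G.vCol j₀ y) = S.vCol j₀ b₀ then (1 : ℝ) else 0))) ^ 2) = Epsi := by
    rw [hEpsi]
    show (∑ ψ : PMap Ω (m * h), pmapWeight Ω w ψ * _) = _
    refine Finset.sum_congr rfl fun ψ _ => ?_
    congr 1
    rw [QK_def,
      Fintype.sum_prod_type (fun p : Ω i₀ × Ω j₀ => wwK w p *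
        gK w ((regz Ω G ψ).vCol i₀) ((regz Ω G ψ).vCol j₀) fpair p ^ 2)]
    refine Finset.sum_congr rfl fun x' _ => Finset.sum_congr rfl fun y' _ => ?_
    rw [wwK]
    congr 1
    have hce : condEE Ω w i₀ j₀
        (fun x y => frameRel Ω G ψ i₀ j₀ x y x' y')
        (fun x y => F (i₀, j₀, a₀, b₀) (G.eCol i₀ j₀ x y) *
          (if some (G.vCol i₀ x) = S.vCol i₀ a₀ ∧
              some (G.vCol j₀ y) = S.vCol j₀ b₀ then (1 : ℝ) else 0))
        = gK w ((regz Ω G ψ).vCol i₀) ((regz Ω G ψ).vCol j₀) fpair (x', y') := by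
      have h1 := condEE_eq_gK w ((regz Ω G ψ).vCol i₀) ((regz Ω G ψ).vCol j₀)
        (fun x y => F (i₀, j₀, a₀, b₀) (G.eCol i₀ j₀ x y) *
          (if some (G.vCol i₀ x) = S.vCol i₀ a₀ ∧
              some (G.vCol j₀ y) = S.vCol j₀ b₀ then (1 : ℝ) else 0)) x' y'
      have h2 : (fun p : Ω i₀ × Ω j₀ =>
          F (i₀, j₀, a₀, b₀) (G.eCol i₀ j₀ p.1 p.2) *
            (if some (G.vCol i₀ p.1) = S.vCol i₀ a₀ ∧
                some (G.vCol j₀ p.2) = S.vCol j₀ b₀ then (1 : ℝ) else 0)) = fpair := by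
        rw [hfpair]
      rw [← h2]
      exact h1
    rw [hce]
  -- ## final combination
  have hV1split : ∏ p ∈ V1 S, dVS Ω w G S p
      = dVS Ω w G S (i₀, a₀) * (dVS Ω w G S (j₀, b₀) * ∏ p ∈ V1'', dVS Ω w G S p) := by
    rw [← Finset.mul_prod_erase (V1 S) _ hmemA, ← Finset.mul_prod_erase _ _ hmemB']
  rw [hRHS]
  calc EPhi Ω w h Pint ^ 2
      ≤ (Dpp * (dVS Ω w G S (i₀, a₀) * dVS Ω w G S (j₀, b₀))) * T' := hCS
    _ ≤ (Dpp * (dVS Ω w G S (i₀, a₀) * dVS Ω w G S (j₀, b₀))) * ((Dpp + 1 / (m : ℝ)) * Epsi) := by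
        refine mul_le_mul_of_nonneg_left hstep2 ?_
        have hdA : 0 ≤ dVS Ω w G S (i₀, a₀) := by
          rw [hdvsA, dV]
          refine Finset.sum_nonneg fun z _ => ?_
          by_cases hz : G.vCol i₀ z = ca
          · simp [hz, hw]
          · simp [hz]
        have hdB : 0 ≤ dVS Ω w G S (j₀, b₀) := by
          rw [hdvsB, dV]
          refine Finset.sum_nonneg fun z _ => ?_
          by_cases hz : G.vCol j₀ z = cb
          · simp [hz, hw]
          · simp [hz]
        positivity
    _ = Epsi * ((∏ p ∈ V1 S, dVS Ω w G S p) * ((∏ p ∈ V1'', dVS Ω w G S p) + 1 / (m : ℝ))) := by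
        rw [hV1split, ← hsumWI]
        ring
end

section
/- Let r ≥ 2, h ≥ 1, b₁, b₂ ≥ 1 be integers and ε > 0, and let m : ℕ → ℕ satisfy m(0) = 0 and m(n+1) ≥ m(n) + M(m(n))·h for all n ≥ 0. Let ñ ≥ 1 be an integer and let G be a (b₁,b₂)-colored 𝔯-partite graph on Ω. For n < ñ and φ ∈ Φ(m(n)) write G* := G/φ, and let η be defined for G* with M = M(m(n)). Then for every I ∈ binom(𝔯,2): ( E_n E_{φ∈Φ(m(n))} E_{ẽ∈Ω_I}[ √(η(G*⟨ẽ⟩)) ] )² ≤ b₂/ñ, where n is uniform on {0, …, ñ−1} and φ, ẽ are random. -/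
open Finset
open scoped BigOperators Classical

set_option linter.unusedSectionVars false
namespace IshAux


variable {α : Type} [Fintype α]

/-- numerator of a conditional expectation -/
noncomputable def num (W : α → ℝ) (A : α → Prop) (f : α → ℝ) : ℝ :=
  ∑ p : α, if A p then W p * f p else 0

noncomputable def den (W : α → ℝ) (A : α → Prop) : ℝ :=
  ∑ p : α, if A p then W p else 0

noncomputable def proj {β : Type} (W : α → ℝ) (F : α → β) (v : α → ℝ) (q : α) : ℝ :=
  num W (fun p => F p = F q) v / den W (fun p => F p = F q)

variable {W : α → ℝ}

lemma den_nonneg (hW : ∀ p, 0 ≤ W p) (A : α → Prop) : 0 ≤ den W A :=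
  Finset.sum_nonneg fun p _ => by split <;> simp [hW p]

lemma le_den (hW : ∀ p, 0 ≤ W p) {A : α → Prop} {q : α} (hq : A q) : W q ≤ den W A := by
  have := Finset.single_le_sum (f := fun p => if A p then W p else 0)
    (fun p _ => by split <;> simp [hW p]) (Finset.mem_univ q)
  simpa [hq, den] using this

lemma num_nonneg (hW : ∀ p, 0 ≤ W p) {A : α → Prop} {f : α → ℝ} (hf : ∀ p, 0 ≤ f p) :
    0 ≤ num W A f :=
  Finset.sum_nonneg fun p _ => by
    split
    · exact mul_nonneg (hW p) (hf p)
    · exact le_rfl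

lemma num_le_den (hW : ∀ p, 0 ≤ W p) {A : α → Prop} {f : α → ℝ} (hf : ∀ p, f p ≤ 1) :
    num W A f ≤ den W A := by
  refine Finset.sum_le_sum fun p _ => ?_
  split
  · have := mul_le_mul_of_nonneg_left (hf p) (hW p)
    simpa using this
  · exact le_rfl

lemma proj_nonneg {β : Type} (hW : ∀ p, 0 ≤ W p) {F : α → β} {v : α → ℝ}
    (hv : ∀ p, 0 ≤ v p) (q : α) : 0 ≤ proj W F v q :=
  div_nonneg (num_nonneg hW hv) (den_nonneg hW _)

lemma proj_le_one {β : Type} (hW : ∀ p, 0 ≤ W p) {F : α → β} {v : α → ℝ}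
    (hv : ∀ p, v p ≤ 1) (q : α) : proj W F v q ≤ 1 :=
  div_le_one_of_le₀ (num_le_den hW hv) (den_nonneg hW _)

lemma proj_congr_class {β : Type} {F : α → β} {v : α → ℝ} {q q' : α}
    (h : F q = F q') : proj W F v q = proj W F v q' := by
  unfold proj; rw [h]

lemma proj_congr_fun {β : Type} {F : α → β} {v v' : α → ℝ} {q : α}
    (h : ∀ p, F p = F q → v p = v' p) : proj W F v q = proj W F v' q := by
  unfold proj num
  congr 1
  refine Finset.sum_congr rfl fun p _ => ?_
  by_cases hp : F p = F q
  · simp [hp, h p hp]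
  · simp [hp]

lemma proj_congr_iff {β₁ β₂ : Type} {F₁ : α → β₁} {F₂ : α → β₂}
    (h : ∀ p p', F₁ p = F₁ p' ↔ F₂ p = F₂ p') (v : α → ℝ) (q : α) :
    proj W F₁ v q = proj W F₂ v q := by
  unfold proj num den
  have hc : ∀ p, (F₁ p = F₁ q) = (F₂ p = F₂ q) := fun p => propext (h p q)
  simp only [hc]

lemma selfadj {β : Type} (hW : ∀ p, 0 ≤ W p) (F : α → β) (u v : α → ℝ) :
    ∑ q : α, W q * u q * proj W F v q = ∑ q : α, W q * v q * proj W F u q := by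
  have expand : ∀ u v : α → ℝ, (∑ q : α, W q * u q * proj W F v q) =
      ∑ q : α, ∑ p : α, if F p = F q then
        W q * u q * (W p * v p) / den W (fun p' => F p' = F q) else 0 := by
    intro u v
    refine Finset.sum_congr rfl fun q _ => ?_
    rw [proj, num, Finset.sum_div, Finset.mul_sum]
    refine Finset.sum_congr rfl fun p _ => ?_
    by_cases hp : F p = F q
    · rw [if_pos hp, if_pos hp]; ring
    · simp [hp]
  rw [expand u v, expand v u, Finset.sum_comm]
  refine Finset.sum_congr rfl fun x _ => Finset.sum_congr rfl fun y _ => ?_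
  by_cases hxy : F x = F y
  · rw [if_pos hxy, if_pos hxy.symm]
    have hden : (fun p' => F p' = F y) = (fun p' => F p' = F x) := by
      funext p'; rw [hxy]
    rw [hden]; ring
  · rw [if_neg hxy, if_neg fun h => hxy h.symm]

lemma num_of_classconst {A : α → Prop} {g : α → ℝ} {c : ℝ}
    (h : ∀ p, A p → g p = c) : num W A g = c * den W A := by
  rw [num, den, Finset.mul_sum]
  refine Finset.sum_congr rfl fun p _ => ?_
  by_cases hp : A p
  · rw [if_pos hp, if_pos hp, h p hp]; ring
  · simp [hp]

lemma proj_idem {β : Type} (F : α → β) (v : α → ℝ) (q : α) :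
    proj W F (proj W F v) q = proj W F v q := by
  have hnum : num W (fun p => F p = F q) (proj W F v) =
      proj W F v q * den W (fun p => F p = F q) :=
    num_of_classconst fun p hp => proj_congr_class hp
  rw [proj, hnum, mul_div_assoc]
  by_cases hd : den W (fun p => F p = F q) = 0
  · rw [hd, div_zero, mul_zero, proj, hd, div_zero]
  · rw [div_self hd, mul_one]

/-- `F'` refines `F` (as partitions). -/
def Refines {β' β : Type} (F' : α → β') (F : α → β) : Prop :=
  ∀ p q, F' p = F' q → F p = F q

lemma proj_absorb {β' β : Type} (hW : ∀ p, 0 ≤ W p) {F' : α → β'} {F : α → β}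
    (h : Refines F' F) (v : α → ℝ) (q : α) :
    W q * proj W F' (proj W F v) q = W q * proj W F v q := by
  have hnum : num W (fun p => F' p = F' q) (proj W F v) =
      proj W F v q * den W (fun p => F' p = F' q) :=
    num_of_classconst fun p hp => proj_congr_class (h p q hp)
  rw [proj, hnum, mul_div_assoc]
  by_cases hq : W q = 0
  · rw [hq, zero_mul, zero_mul]
  · have hWq : 0 < W q := lt_of_le_of_ne (hW q) (Ne.symm hq)
    have hden : 0 < den W (fun p => F' p = F' q) :=
      lt_of_lt_of_le hWq (le_den hW rfl)
    rw [div_self (ne_of_gt hden), mul_one]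

/-! ### Energy -/

noncomputable def uind {K : Type} (χ : α → K) (c : K) : α → ℝ :=
  fun p => if χ p = c then 1 else 0

lemma uind_nonneg {K : Type} (χ : α → K) (c : K) (p : α) : 0 ≤ uind χ c p := by
  unfold uind; split <;> norm_num

lemma uind_le_one {K : Type} (χ : α → K) (c : K) (p : α) : uind χ c p ≤ 1 := by
  unfold uind; split <;> norm_num

noncomputable def En {K β : Type} [Fintype K] (W : α → ℝ) (χ : α → K) (F : α → β) : ℝ :=
  ∑ c : K, ∑ q : α, W q * uind χ c q * proj W F (uind χ c) q

lemma sum_pick {K : Type} [Fintype K] (χ : α → K) (Y : K → α → ℝ) (q : α) :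
    ∑ c : K, W q * uind χ c q * Y c q = W q * Y (χ q) q := by
  have : ∀ c : K, W q * uind χ c q * Y c q =
      if χ q = c then W q * Y c q else 0 := by
    intro c; unfold uind
    by_cases hc : χ q = c
    · rw [if_pos hc, if_pos hc]; ring
    · rw [if_neg hc, if_neg hc]; ring
  simp_rw [this]
  rw [Finset.sum_ite_eq]
  simp

lemma En_pick {K β : Type} [Fintype K] (χ : α → K) (F : α → β) :
    En W χ F = ∑ q : α, W q * proj W F (uind χ (χ q)) q := by
  rw [En, Finset.sum_comm]
  exact Finset.sum_congr rfl fun q _ =>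
    sum_pick χ (fun c q' => proj W F (uind χ c) q') q

lemma En_nonneg {K β : Type} [Fintype K] (hW : ∀ p, 0 ≤ W p) (χ : α → K) (F : α → β) :
    0 ≤ En W χ F :=
  Finset.sum_nonneg fun c _ => Finset.sum_nonneg fun q _ =>
    mul_nonneg (mul_nonneg (hW q) (uind_nonneg χ c q))
      (proj_nonneg hW (uind_nonneg χ c) q)

lemma En_le_one {K β : Type} [Fintype K] (hW : ∀ p, 0 ≤ W p)
    (hW1 : ∑ p : α, W p = 1) (χ : α → K) (F : α → β) : En W χ F ≤ 1 := by
  rw [En_pick]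
  calc ∑ q : α, W q * proj W F (uind χ (χ q)) q ≤ ∑ q : α, W q := by
        refine Finset.sum_le_sum fun q _ => ?_
        calc W q * proj W F (uind χ (χ q)) q ≤ W q * 1 :=
              mul_le_mul_of_nonneg_left
                (proj_le_one (F := F) hW (uind_le_one χ (χ q)) q) (hW q)
          _ = W q := mul_one _
    _ = 1 := hW1

lemma En_increment {K β' β : Type} [Fintype K] (hW : ∀ p, 0 ≤ W p) (χ : α → K)
    {F' : α → β'} {F : α → β} (h : Refines F' F) :
    ∑ c : K, ∑ q : α,
      W q * (proj W F' (uind χ c) q - proj W F (uind χ c) q) ^ 2 =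
    En W χ F' - En W χ F := by
  rw [En, En, ← Finset.sum_sub_distrib]
  refine Finset.sum_congr rfl fun c _ => ?_
  set f : α → ℝ := proj W F' (uind χ c) with hf
  set g : α → ℝ := proj W F (uind χ c) with hg
  have h1 : ∑ q : α, W q * (f q * f q) = ∑ q : α, W q * uind χ c q * f q := by
    have := selfadj hW F' f (uind χ c)
    calc ∑ q : α, W q * (f q * f q) = ∑ q : α, W q * f q * proj W F' (uind χ c) q := by
          refine Finset.sum_congr rfl fun q _ => ?_; rw [← hf]; ring
      _ = ∑ q : α, W q * uind χ c q * proj W F' f q := this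
      _ = ∑ q : α, W q * uind χ c q * f q := by
          refine Finset.sum_congr rfl fun q _ => ?_
          rw [hf, proj_idem]
  have h2 : ∑ q : α, W q * (g q * g q) = ∑ q : α, W q * uind χ c q * g q := by
    have := selfadj hW F g (uind χ c)
    calc ∑ q : α, W q * (g q * g q) = ∑ q : α, W q * g q * proj W F (uind χ c) q := by
          refine Finset.sum_congr rfl fun q _ => ?_; rw [← hg]; ring
      _ = ∑ q : α, W q * uind χ c q * proj W F g q := this
      _ = ∑ q : α, W q * uind χ c q * g q := by
          refine Finset.sum_congr rfl fun q _ => ?_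
          rw [hg, proj_idem]
  have h3 : ∑ q : α, W q * (f q * g q) = ∑ q : α, W q * (g q * g q) := by
    calc ∑ q : α, W q * (f q * g q)
        = ∑ q : α, W q * g q * proj W F' (uind χ c) q := by
          refine Finset.sum_congr rfl fun q _ => ?_; rw [← hf]; ring
      _ = ∑ q : α, W q * uind χ c q * proj W F' g q := selfadj hW F' g (uind χ c)
      _ = ∑ q : α, W q * uind χ c q * g q := by
          refine Finset.sum_congr rfl fun q _ => ?_
          have habs : W q * proj W F' g q = W q * g q := proj_absorb hW h (uind χ c) q
          calc W q * uind χ c q * proj W F' g q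
              = uind χ c q * (W q * proj W F' g q) := by ring
            _ = uind χ c q * (W q * g q) := by rw [habs]
            _ = W q * uind χ c q * g q := by ring
      _ = ∑ q : α, W q * (g q * g q) := by rw [h2]
  have expand : ∑ q : α, W q * (f q - g q) ^ 2 =
      (∑ q : α, W q * (f q * f q)) - 2 * (∑ q : α, W q * (f q * g q)) +
        ∑ q : α, W q * (g q * g q) := by
    calc ∑ q : α, W q * (f q - g q) ^ 2
        = ∑ q : α, (W q * (f q * f q) - 2 * (W q * (f q * g q)) + W q * (g q * g q)) :=
          Finset.sum_congr rfl fun q _ => by ring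
      _ = _ := by rw [Finset.sum_add_distrib, Finset.sum_sub_distrib, Finset.mul_sum]
  rw [expand, h3, h1, h2]
  ring


lemma jensen_sq {ι : Type*} (s : Finset ι) (p f : ι → ℝ)
    (hp : ∀ a ∈ s, 0 ≤ p a) (hp1 : ∑ a ∈ s, p a = 1) :
    (∑ a ∈ s, p a * f a) ^ 2 ≤ ∑ a ∈ s, p a * f a ^ 2 := by
  have h := Finset.sum_sq_le_sum_mul_sum_of_sq_eq_mul s
    (r := fun a => p a * f a) (f := p) (g := fun a => p a * f a ^ 2) hp
    (fun a ha => mul_nonneg (hp a ha) (sq_nonneg _)) (fun a ha => by ring)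
  rwa [hp1, one_mul] at h

section EPhiLemmas

variable {r : ℕ} (Ω : Fin r → Type) [∀ i, Fintype (Ω i)]
  (w : ∀ i, Ω i → ℝ) (hw : ∀ i x, 0 ≤ w i x) (htot : ∀ i, ∑ x : Ω i, w i x = 1)

include hw htot

lemma pmapWeight_nonneg {h : ℕ} (φ : PMap Ω h) : 0 ≤ pmapWeight Ω w φ :=
  Finset.prod_nonneg fun i _ => Finset.prod_nonneg fun a _ => hw i (φ i a)

lemma sum_pmapWeight (h : ℕ) : ∑ φ : PMap Ω h, pmapWeight Ω w φ = 1 := by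
  have inner : ∀ i : Fin r, ∑ g : Fin h → Ω i, ∏ a : Fin h, w i (g a) = 1 := by
    intro i
    rw [← Fintype.prod_sum (fun (_ : Fin h) (x : Ω i) => w i x)]
    simp [htot i, one_pow]
  calc ∑ φ : PMap Ω h, pmapWeight Ω w φ
      = ∑ φ : (∀ i : Fin r, Fin h → Ω i), ∏ i : Fin r, ∏ a : Fin h, w i (φ i a) := rfl
    _ = ∏ i : Fin r, ∑ g : Fin h → Ω i, ∏ a : Fin h, w i (g a) :=
        (Fintype.prod_sum fun i (g : Fin h → Ω i) => ∏ a : Fin h, w i (g a)).symm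
    _ = 1 := by simp [inner]

lemma EPhi_const (h : ℕ) (c : ℝ) : EPhi Ω w h (fun _ => c) = c := by
  unfold EPhi
  rw [← Finset.sum_mul, sum_pmapWeight Ω w hw htot, one_mul]

lemma EPhi_mono (h : ℕ) {f g : PMap Ω h → ℝ} (hfg : ∀ φ, f φ ≤ g φ) :
    EPhi Ω w h f ≤ EPhi Ω w h g :=
  Finset.sum_le_sum fun φ _ =>
    mul_le_mul_of_nonneg_left (hfg φ) (pmapWeight_nonneg Ω w hw htot φ)

lemma EPhi_nonneg (h : ℕ) {f : PMap Ω h → ℝ} (hf : ∀ φ, 0 ≤ f φ) :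
    0 ≤ EPhi Ω w h f :=
  Finset.sum_nonneg fun φ _ => mul_nonneg (pmapWeight_nonneg Ω w hw htot φ) (hf φ)

lemma EPhi_sub_const (h : ℕ) (f : PMap Ω h → ℝ) (c : ℝ) :
    EPhi Ω w h (fun φ => f φ - c) = EPhi Ω w h f - c := by
  unfold EPhi
  have : ∀ φ : PMap Ω h, pmapWeight Ω w φ * (f φ - c) =
      pmapWeight Ω w φ * f φ - pmapWeight Ω w φ * c := fun φ => by ring
  simp_rw [this]
  rw [Finset.sum_sub_distrib, ← Finset.sum_mul, sum_pmapWeight Ω w hw htot, one_mul]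

lemma EPhi_sum_comm {α : Type*} [Fintype α] (h : ℕ) (g : PMap Ω h → α → ℝ) :
    EPhi Ω w h (fun φ => ∑ q : α, g φ q) = ∑ q : α, EPhi Ω w h (fun φ => g φ q) := by
  unfold EPhi
  simp_rw [Finset.mul_sum]
  exact Finset.sum_comm

lemma EPhi_mul_const (h : ℕ) (c : ℝ) (f : PMap Ω h → ℝ) :
    c * EPhi Ω w h f = EPhi Ω w h (fun φ => c * f φ) := by
  unfold EPhi
  rw [Finset.mul_sum]
  exact Finset.sum_congr rfl fun φ _ => by ring

lemma EPhi_sq_le (h : ℕ) (f : PMap Ω h → ℝ) :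
    (EPhi Ω w h f) ^ 2 ≤ EPhi Ω w h (fun φ => f φ ^ 2) := by
  unfold EPhi
  exact jensen_sq univ (fun φ => pmapWeight Ω w φ) f
    (fun φ _ => pmapWeight_nonneg Ω w hw htot φ) (sum_pmapWeight Ω w hw htot h)

lemma pmapWeight_append {K L : ℕ} (φ : PMap Ω K) (ψ : PMap Ω L) :
    pmapWeight Ω w (fun i => Fin.append (φ i) (ψ i)) =
      pmapWeight Ω w φ * pmapWeight Ω w ψ := by
  unfold pmapWeight
  rw [← Finset.prod_mul_distrib]
  refine Finset.prod_congr rfl fun i _ => ?_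
  rw [Fin.prod_univ_add (f := fun b => w i (Fin.append (φ i) (ψ i) b))]
  congr 1
  · exact Finset.prod_congr rfl fun a _ => by rw [Fin.append_left]
  · exact Finset.prod_congr rfl fun a _ => by rw [Fin.append_right]

lemma append_bijective (K L : ℕ) :
    Function.Bijective (fun (φψ : PMap Ω K × PMap Ω L) =>
      (fun i => Fin.append (φψ.1 i) (φψ.2 i) : PMap Ω (K + L))) := by
  constructor
  · rintro ⟨φ, ψ⟩ ⟨φ', ψ'⟩ hΕ
    have h' := fun (i : Fin r) => congrFun hΕ i
    refine Prod.ext ?_ ?_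
    · funext i a
      have := congrFun (h' i) (Fin.castAdd L a)
      simpa [Fin.append_left] using this
    · funext i a
      have := congrFun (h' i) (Fin.natAdd K a)
      simpa [Fin.append_right] using this
  · intro χ
    refine ⟨⟨fun i a => χ i (Fin.castAdd L a), fun i a => χ i (Fin.natAdd K a)⟩, ?_⟩
    funext i b
    refine Fin.addCases (fun c => ?_) (fun c => ?_) b
    · simp [Fin.append_left]
    · simp [Fin.append_right]

lemma EPhi_split (K L : ℕ) (f : PMap Ω (K + L) → ℝ) :
    EPhi Ω w (K + L) f =
      EPhi Ω w K (fun φ => EPhi Ω w L (fun ψ =>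
        f (fun i => Fin.append (φ i) (ψ i)))) := by
  unfold EPhi
  have hb := append_bijective Ω w hw htot K L
  rw [← Fintype.sum_bijective _ hb
    (fun φψ : PMap Ω K × PMap Ω L =>
      pmapWeight Ω w φψ.1 * (pmapWeight Ω w φψ.2 *
        f (fun i => Fin.append (φψ.1 i) (φψ.2 i))))
    (fun χ => pmapWeight Ω w χ * f χ)
    (fun φψ => by rw [pmapWeight_append Ω w hw htot, mul_assoc])]
  rw [Fintype.sum_prod_type]
  refine Finset.sum_congr rfl fun φ _ => ?_
  rw [Finset.mul_sum]

end EPhiLemmas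
section Frames

variable {r : ℕ} (Ω : Fin r → Type) [∀ i, Fintype (Ω i)]
  (w : ∀ i, Ω i → ℝ) {K₁ K₂ : Type} [Fintype K₁] [Fintype K₂]

/-- product weight on pairs -/
noncomputable def Wpair (i j : Fin r) : Ω i × Ω j → ℝ := fun p => w i p.1 * w j p.2

/-- the (fixed) edge coloring on pairs -/
noncomputable def chiE (G : CGraph Ω K₁ K₂) (i j : Fin r) : Ω i × Ω j → K₂ :=
  fun p => G.eCol i j p.1 p.2

/-- frame coloring of pairs after regularizing by `φ` -/
noncomputable def Fr (G : CGraph Ω K₁ K₂) (i j : Fin r) {M : ℕ} (φ : PMap Ω M) :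
    Ω i × Ω j → (K₁ × (Fin r → Fin M → Option K₂)) × (K₁ × (Fin r → Fin M → Option K₂)) :=
  fun p => ((regz Ω G φ).vCol i p.1, (regz Ω G φ).vCol j p.2)

/-- frame coloring after double regularization -/
noncomputable def FrF (G : CGraph Ω K₁ K₂) (i j : Fin r) {M N : ℕ}
    (φ : PMap Ω M) (ψ : PMap Ω N) :
    Ω i × Ω j →
      ((K₁ × (Fin r → Fin M → Option K₂)) × (Fin r → Fin N → Option K₂)) ×
        ((K₁ × (Fin r → Fin M → Option K₂)) × (Fin r → Fin N → Option K₂)) :=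
  fun p => ((regz Ω (regz Ω G φ) ψ).vCol i p.1, (regz Ω (regz Ω G φ) ψ).vCol j p.2)

/-- appending two partitionwise maps -/
def appPM {M N : ℕ} (φ : PMap Ω M) (ψ : PMap Ω N) : PMap Ω (M + N) :=
  fun i => Fin.append (φ i) (ψ i)

lemma Wpair_nonneg (hw : ∀ i x, 0 ≤ w i x) (i j : Fin r) (p : Ω i × Ω j) :
    0 ≤ Wpair Ω w i j p := mul_nonneg (hw i p.1) (hw j p.2)

lemma sum_pair (i j : Fin r) (g : Ω i → Ω j → ℝ) :
    ∑ p : Ω i × Ω j, g p.1 p.2 = ∑ x : Ω i, ∑ y : Ω j, g x y :=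
  Fintype.sum_prod_type _

lemma Wpair_sum_one (htot : ∀ i, ∑ x : Ω i, w i x = 1) (i j : Fin r) :
    ∑ p : Ω i × Ω j, Wpair Ω w i j p = 1 := by
  unfold Wpair
  rw [sum_pair Ω i j fun x y => w i x * w j y]
  have : ∀ x : Ω i, ∑ y : Ω j, w i x * w j y = w i x := by
    intro x; rw [← Finset.mul_sum, htot j, mul_one]
  simp_rw [this]
  exact htot i

lemma regz_vCol_eq_iff (G : CGraph Ω K₁ K₂) {M : ℕ} (φ : PMap Ω M) (i₀ : Fin r)
    (x x' : Ω i₀) :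
    (regz Ω G φ).vCol i₀ x = (regz Ω G φ).vCol i₀ x' ↔
      (G.vCol i₀ x = G.vCol i₀ x' ∧
        ∀ j' b, j' ≠ i₀ → G.eCol i₀ j' x (φ j' b) = G.eCol i₀ j' x' (φ j' b)) := by
  show ((G.vCol i₀ x, fun j' b => if j' = i₀ then none
        else some (G.eCol i₀ j' x (φ j' b))) :
        K₁ × (Fin r → Fin M → Option K₂)) =
      (G.vCol i₀ x', fun j' b => if j' = i₀ then none
        else some (G.eCol i₀ j' x' (φ j' b))) ↔ _
  rw [Prod.mk.injEq]
  constructor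
  · rintro ⟨h1, h2⟩
    refine ⟨h1, fun j' b hne => ?_⟩
    have := congrFun (congrFun h2 j') b
    rw [if_neg hne, if_neg hne] at this
    exact Option.some.inj this
  · rintro ⟨h1, h2⟩
    refine ⟨h1, ?_⟩
    funext j' b
    by_cases hne : j' = i₀
    · simp [hne]
    · rw [if_neg hne, if_neg hne, h2 j' b hne]

lemma vCol_append_iff (G : CGraph Ω K₁ K₂) {M N : ℕ} (φ : PMap Ω M) (ψ : PMap Ω N)
    (i₀ : Fin r) (x x' : Ω i₀) :
    (regz Ω G (appPM Ω φ ψ)).vCol i₀ x = (regz Ω G (appPM Ω φ ψ)).vCol i₀ x' ↔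
      (regz Ω (regz Ω G φ) ψ).vCol i₀ x = (regz Ω (regz Ω G φ) ψ).vCol i₀ x' := by
  rw [regz_vCol_eq_iff, regz_vCol_eq_iff (G := regz Ω G φ), regz_vCol_eq_iff]
  show (_ ∧ ∀ j' b, _ → G.eCol i₀ j' x (appPM Ω φ ψ j' b) =
      G.eCol i₀ j' x' (appPM Ω φ ψ j' b)) ↔
    ((_ ∧ _) ∧ ∀ j' b, _ → G.eCol i₀ j' x (ψ j' b) = G.eCol i₀ j' x' (ψ j' b))
  constructor
  · rintro ⟨h1, h2⟩
    refine ⟨⟨h1, fun j' b hne => ?_⟩, fun j' b hne => ?_⟩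
    · have := h2 j' (Fin.castAdd N b) hne
      simpa [appPM, Fin.append_left] using this
    · have := h2 j' (Fin.natAdd M b) hne
      simpa [appPM, Fin.append_right] using this
  · rintro ⟨⟨h1, h2⟩, h3⟩
    refine ⟨h1, fun j' b hne => ?_⟩
    refine Fin.addCases (motive := fun b => G.eCol i₀ j' x (appPM Ω φ ψ j' b) =
      G.eCol i₀ j' x' (appPM Ω φ ψ j' b)) (fun c => ?_) (fun c => ?_) b
    · simpa [appPM, Fin.append_left] using h2 j' c hne
    · simpa [appPM, Fin.append_right] using h3 j' c hne

lemma vCol_restrict (G : CGraph Ω K₁ K₂) {M N : ℕ} (φ : PMap Ω M) (ψ : PMap Ω N)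
    (i₀ : Fin r) (x x' : Ω i₀)
    (h : (regz Ω G (appPM Ω φ ψ)).vCol i₀ x = (regz Ω G (appPM Ω φ ψ)).vCol i₀ x') :
    (regz Ω G φ).vCol i₀ x = (regz Ω G φ).vCol i₀ x' := by
  rw [regz_vCol_eq_iff] at h ⊢
  obtain ⟨h1, h2⟩ := h
  refine ⟨h1, fun j' b hne => ?_⟩
  have := h2 j' (Fin.castAdd N b) hne
  simpa [appPM, Fin.append_left] using this

lemma Fr_append_iff (G : CGraph Ω K₁ K₂) (i j : Fin r) {M N : ℕ}
    (φ : PMap Ω M) (ψ : PMap Ω N) (p q : Ω i × Ω j) :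
    Fr Ω G i j (appPM Ω φ ψ) p = Fr Ω G i j (appPM Ω φ ψ) q ↔
      FrF Ω G i j φ ψ p = FrF Ω G i j φ ψ q := by
  unfold Fr FrF
  constructor <;> intro h
  · exact Prod.ext ((vCol_append_iff Ω G φ ψ i p.1 q.1).mp (congrArg Prod.fst h))
      ((vCol_append_iff Ω G φ ψ j p.2 q.2).mp (congrArg Prod.snd h))
  · exact Prod.ext ((vCol_append_iff Ω G φ ψ i p.1 q.1).mpr (congrArg Prod.fst h))
      ((vCol_append_iff Ω G φ ψ j p.2 q.2).mpr (congrArg Prod.snd h))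

lemma Fr_refines_restrict (G : CGraph Ω K₁ K₂) (i j : Fin r) {M N : ℕ}
    (φ : PMap Ω M) (ψ : PMap Ω N) :
    Refines (Fr Ω G i j (appPM Ω φ ψ)) (Fr Ω G i j φ) := by
  intro p q h
  unfold Fr at h ⊢
  exact Prod.ext (vCol_restrict Ω G φ ψ i p.1 q.1 (congrArg Prod.fst h))
    (vCol_restrict Ω G φ ψ j p.2 q.2 (congrArg Prod.snd h))

lemma FrF_refines_Fr (G : CGraph Ω K₁ K₂) (i j : Fin r) {M N : ℕ}
    (φ : PMap Ω M) (ψ : PMap Ω N) :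
    Refines (FrF Ω G i j φ ψ) (Fr Ω G i j φ) := by
  intro p q h
  exact congrArg (fun z => (z.1.1, z.2.1)) h

end Frames

section EtaChain

variable {r : ℕ} (Ω : Fin r → Type) [∀ i, Fintype (Ω i)]
  (w : ∀ i, Ω i → ℝ) {K₁ K₂ : Type} [Fintype K₁] [Fintype K₂]

lemma EPhi_congr (h : ℕ) {f g : PMap Ω h → ℝ} (hfg : ∀ φ, f φ = g φ) :
    EPhi Ω w h f = EPhi Ω w h g := by
  unfold EPhi
  exact Finset.sum_congr rfl fun φ _ => by rw [hfg]

lemma EPhi_sub (h : ℕ) (f g : PMap Ω h → ℝ) :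
    EPhi Ω w h (fun φ => f φ - g φ) = EPhi Ω w h f - EPhi Ω w h g := by
  unfold EPhi
  rw [← Finset.sum_sub_distrib]
  exact Finset.sum_congr rfl fun φ _ => by ring

lemma sum_pair' (i j : Fin r) (g : Ω i × Ω j → ℝ) :
    ∑ x : Ω i, ∑ y : Ω j, g (x, y) = ∑ p : Ω i × Ω j, g p :=
  (Fintype.sum_prod_type g).symm

@[simp] lemma Wpair_apply (i j : Fin r) (p : Ω i × Ω j) :
    Wpair Ω w i j p = w i p.1 * w j p.2 := rfl

lemma sum2_eq_num (i j : Fin r) (A : Ω i → Ω j → Prop) (f : Ω i → Ω j → ℝ)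
    (B : Ω i × Ω j → Prop) (v : Ω i × Ω j → ℝ)
    (hterm : ∀ x y, (if A x y then w i x * w j y * f x y else 0) =
      if B (x, y) then w i x * w j y * v (x, y) else 0) :
    (∑ x : Ω i, ∑ y : Ω j, if A x y then w i x * w j y * f x y else 0) =
      num (Wpair Ω w i j) B v := by
  have hnum : num (Wpair Ω w i j) B v =
      ∑ p : Ω i × Ω j, if B p then w i p.1 * w j p.2 * v p else 0 := by
    unfold num
    exact Finset.sum_congr rfl fun p _ => by rw [Wpair_apply]
  rw [hnum, ← sum_pair' Ω i j (fun p => if B p then w i p.1 * w j p.2 * v p else 0)]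
  exact Finset.sum_congr rfl fun x _ => Finset.sum_congr rfl fun y _ => hterm x y

lemma sum2_eq_den (i j : Fin r) (A : Ω i → Ω j → Prop) (B : Ω i × Ω j → Prop)
    (hAB : ∀ x y, A x y ↔ B (x, y)) :
    (∑ x : Ω i, ∑ y : Ω j, if A x y then w i x * w j y else 0) =
      den (Wpair Ω w i j) B := by
  have hden : den (Wpair Ω w i j) B =
      ∑ p : Ω i × Ω j, if B p then w i p.1 * w j p.2 else 0 := by
    unfold den
    exact Finset.sum_congr rfl fun p _ => by rw [Wpair_apply]
  rw [hden, ← sum_pair' Ω i j (fun p => if B p then w i p.1 * w j p.2 else 0)]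
  refine Finset.sum_congr rfl fun x _ => Finset.sum_congr rfl fun y _ => ?_
  by_cases hxy : A x y
  · rw [if_pos hxy, if_pos ((hAB x y).mp hxy)]
  · rw [if_neg hxy, if_neg fun hh => hxy ((hAB x y).mpr hh)]

lemma condEE_eq_proj {β : Type} (i j : Fin r) (F : Ω i × Ω j → β) (q : Ω i × Ω j)
    (A : Ω i → Ω j → Prop) (f : Ω i → Ω j → ℝ) (v : Ω i × Ω j → ℝ)
    (hA : ∀ x y, A x y ↔ F (x, y) = F q) (hf : ∀ x y, f x y = v (x, y)) :
    condEE Ω w i j A f = proj (Wpair Ω w i j) F v q := by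
  unfold condEE proj
  rw [sum2_eq_num Ω w i j A f (fun p => F p = F q) v (fun x y => ?_),
    sum2_eq_den Ω w i j A (fun p => F p = F q) hA]
  by_cases hxy : A x y
  · rw [if_pos hxy, if_pos ((hA x y).mp hxy), hf x y]
  · rw [if_neg hxy, if_neg fun hh => hxy ((hA x y).mpr hh)]

lemma sum2_eq_num' (i j : Fin r) (A : Ω i → Ω j → Prop)
    (B : Ω i × Ω j → Prop) (v : Ω i × Ω j → ℝ)
    (hterm : ∀ x y, (if A x y then w i x * w j y else 0) =
      if B (x, y) then w i x * w j y * v (x, y) else 0) :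
    (∑ x : Ω i, ∑ y : Ω j, if A x y then w i x * w j y else 0) =
      num (Wpair Ω w i j) B v := by
  have hnum : num (Wpair Ω w i j) B v =
      ∑ p : Ω i × Ω j, if B p then w i p.1 * w j p.2 * v p else 0 := by
    unfold num
    exact Finset.sum_congr rfl fun p _ => by rw [Wpair_apply]
  rw [hnum, ← sum_pair' Ω i j (fun p => if B p then w i p.1 * w j p.2 * v p else 0)]
  exact Finset.sum_congr rfl fun x _ => Finset.sum_congr rfl fun y _ => hterm x y

lemma dE_eq_proj {K₃ : Type} (H : CGraph Ω K₃ K₂) (i j : Fin r) (c₂ : K₂)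
    (q : Ω i × Ω j) :
    dE Ω w H i j c₂ (H.vCol i q.1) (H.vCol j q.2) =
      proj (Wpair Ω w i j) (fun p : Ω i × Ω j => (H.vCol i p.1, H.vCol j p.2))
        (uind (fun p : Ω i × Ω j => H.eCol i j p.1 p.2) c₂) q := by
  unfold dE proj
  have hden := sum2_eq_den Ω w i j
    (fun x y => H.vCol i x = H.vCol i q.1 ∧ H.vCol j y = H.vCol j q.2)
    (fun p : Ω i × Ω j =>
      (fun p : Ω i × Ω j => (H.vCol i p.1, H.vCol j p.2)) p =
      (fun p : Ω i × Ω j => (H.vCol i p.1, H.vCol j p.2)) q)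
    (fun x y => by
      dsimp only
      constructor
      · rintro ⟨ha, hb⟩; exact Prod.ext ha hb
      · intro hh; exact ⟨congrArg Prod.fst hh, congrArg Prod.snd hh⟩)
  have hnum := sum2_eq_num' Ω w i j
    (fun x y => H.eCol i j x y = c₂ ∧ H.vCol i x = H.vCol i q.1 ∧
      H.vCol j y = H.vCol j q.2)
    (fun p : Ω i × Ω j =>
      (fun p : Ω i × Ω j => (H.vCol i p.1, H.vCol j p.2)) p =
      (fun p : Ω i × Ω j => (H.vCol i p.1, H.vCol j p.2)) q)
    (uind (fun p : Ω i × Ω j => H.eCol i j p.1 p.2) c₂)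
    (fun x y => by
      dsimp only
      unfold uind
      by_cases h2 : H.vCol i x = H.vCol i q.1 ∧ H.vCol j y = H.vCol j q.2
      · rw [if_pos (Prod.ext h2.1 h2.2)]
        by_cases h1 : H.eCol i j x y = c₂
        · rw [if_pos ⟨h1, h2⟩, if_pos h1, mul_one]
        · rw [if_neg (fun hh => h1 hh.1), if_neg h1, mul_zero]
      · rw [if_neg (fun hh => h2 hh.2), if_neg (fun hh => h2 ⟨congrArg Prod.fst hh,
          congrArg Prod.snd hh⟩)])
  dsimp only at hnum hden
  congr 1
  · refine Eq.trans ?_ hnum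
    refine Finset.sum_congr rfl fun x _ => Finset.sum_congr rfl fun y _ => ?_
    congr
  · refine Eq.trans ?_ hden
    refine Finset.sum_congr rfl fun x _ => Finset.sum_congr rfl fun y _ => ?_
    congr

lemma eta_eq (G : CGraph Ω K₁ K₂) (i j : Fin r) {M : ℕ} (φ : PMap Ω M) (N : ℕ)
    (q : Ω i × Ω j) :
    eta Ω w (regz Ω G φ) N i j (chiE Ω G i j q)
        ((regz Ω G φ).vCol i q.1) ((regz Ω G φ).vCol j q.2) =
      EPhi Ω w N (fun ψ =>
        proj (Wpair Ω w i j) (Fr Ω G i j φ)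
          (fun p =>
            (proj (Wpair Ω w i j) (FrF Ω G i j φ ψ)
                (uind (chiE Ω G i j) (chiE Ω G i j q)) p -
              proj (Wpair Ω w i j) (Fr Ω G i j φ)
                (uind (chiE Ω G i j) (chiE Ω G i j q)) q) ^ 2) q) := by
  unfold eta
  refine EPhi_congr Ω w N fun ψ => ?_
  have hdE : dE Ω w (regz Ω G φ) i j (chiE Ω G i j q)
      ((regz Ω G φ).vCol i q.1) ((regz Ω G φ).vCol j q.2) =
      proj (Wpair Ω w i j) (Fr Ω G i j φ)
        (uind (chiE Ω G i j) (chiE Ω G i j q)) q :=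
    dE_eq_proj Ω w (regz Ω G φ) i j (chiE Ω G i j q) q
  rw [hdE]
  refine condEE_eq_proj Ω w i j (Fr Ω G i j φ) q _ _ _ (fun x y => ?_) (fun x y => ?_)
  · constructor
    · rintro ⟨h1, h2⟩; exact Prod.ext h1 h2
    · intro hh; exact ⟨congrArg Prod.fst hh, congrArg Prod.snd hh⟩
  · have hin : condEE Ω w i j
        (fun x' y' => frameRel Ω (regz Ω G φ) ψ i j x' y' x y)
        (fun x' y' => if (regz Ω G φ).eCol i j x' y' = chiE Ω G i j q then 1 else 0) =
        proj (Wpair Ω w i j) (FrF Ω G i j φ ψ)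
          (uind (chiE Ω G i j) (chiE Ω G i j q)) (x, y) := by
      refine condEE_eq_proj Ω w i j (FrF Ω G i j φ ψ) (x, y) _ _ _
        (fun x' y' => ?_) (fun x' y' => rfl)
      unfold frameRel FrF
      constructor
      · rintro ⟨h1, h2⟩; exact Prod.ext h1 h2
      · intro hh; exact ⟨congrArg Prod.fst hh, congrArg Prod.snd hh⟩
    rw [hin]

end EtaChain

section EnMore

variable {α : Type} [Fintype α] {W : α → ℝ}

lemma En_mono {K β' β : Type} [Fintype K] (hW : ∀ p, 0 ≤ W p) (χ : α → K)
    {F' : α → β'} {F : α → β} (h : Refines F' F) : En W χ F ≤ En W χ F' := by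
  have hinc := En_increment hW χ h
  have hpos : 0 ≤ ∑ c : K, ∑ q : α,
      W q * (proj W F' (uind χ c) q - proj W F (uind χ c) q) ^ 2 :=
    Finset.sum_nonneg fun c _ => Finset.sum_nonneg fun q _ =>
      mul_nonneg (hW q) (sq_nonneg _)
  linarith

lemma En_congr_iff {K β₁ β₂ : Type} [Fintype K] (χ : α → K) {F₁ : α → β₁}
    {F₂ : α → β₂} (h : ∀ p p', F₁ p = F₁ p' ↔ F₂ p = F₂ p') :
    En W χ F₁ = En W χ F₂ := by
  unfold En
  refine Finset.sum_congr rfl fun c _ => Finset.sum_congr rfl fun q _ => ?_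
  rw [proj_congr_iff h (uind χ c) q]

end EnMore

section MainChain

variable {r : ℕ} (Ω : Fin r → Type) [∀ i, Fintype (Ω i)]
  (w : ∀ i, Ω i → ℝ) {K₁ K₂ : Type} [Fintype K₁] [Fintype K₂]

lemma eta_nonneg' (hw : ∀ i x, 0 ≤ w i x) (htot : ∀ i, ∑ x : Ω i, w i x = 1)
    (G : CGraph Ω K₁ K₂) (i j : Fin r)
    {M : ℕ} (φ : PMap Ω M) (N : ℕ) (q : Ω i × Ω j) :
    0 ≤ eta Ω w (regz Ω G φ) N i j (chiE Ω G i j q)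
      ((regz Ω G φ).vCol i q.1) ((regz Ω G φ).vCol j q.2) := by
  rw [eta_eq Ω w G i j φ N q]
  exact EPhi_nonneg Ω w hw htot N fun ψ =>
    proj_nonneg (Wpair_nonneg Ω w hw i j) (fun p => sq_nonneg _) q

lemma sum_eta_le (hw : ∀ i x, 0 ≤ w i x) (htot : ∀ i, ∑ x : Ω i, w i x = 1)
    (G : CGraph Ω K₁ K₂) (i j : Fin r) {M : ℕ} (φ : PMap Ω M) (N : ℕ) :
    (∑ q : Ω i × Ω j, Wpair Ω w i j q *
      eta Ω w (regz Ω G φ) N i j (chiE Ω G i j q)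
        ((regz Ω G φ).vCol i q.1) ((regz Ω G φ).vCol j q.2)) ≤
    EPhi Ω w N (fun ψ =>
        En (Wpair Ω w i j) (chiE Ω G i j) (FrF Ω G i j φ ψ)) -
      En (Wpair Ω w i j) (chiE Ω G i j) (Fr Ω G i j φ) := by
  have hWnn : ∀ p, 0 ≤ Wpair Ω w i j p := Wpair_nonneg Ω w hw i j
  calc (∑ q : Ω i × Ω j, Wpair Ω w i j q *
      eta Ω w (regz Ω G φ) N i j (chiE Ω G i j q)
        ((regz Ω G φ).vCol i q.1) ((regz Ω G φ).vCol j q.2))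
      = ∑ q : Ω i × Ω j, EPhi Ω w N (fun ψ => Wpair Ω w i j q *
          proj (Wpair Ω w i j) (Fr Ω G i j φ)
            (fun p =>
              (proj (Wpair Ω w i j) (FrF Ω G i j φ ψ)
                  (uind (chiE Ω G i j) (chiE Ω G i j q)) p -
                proj (Wpair Ω w i j) (Fr Ω G i j φ)
                  (uind (chiE Ω G i j) (chiE Ω G i j q)) q) ^ 2) q) := by
        refine Finset.sum_congr rfl fun q _ => ?_
        rw [eta_eq Ω w G i j φ N q, EPhi_mul_const Ω w hw htot]
    _ = EPhi Ω w N (fun ψ => ∑ q : Ω i × Ω j, Wpair Ω w i j q *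
          proj (Wpair Ω w i j) (Fr Ω G i j φ)
            (fun p =>
              (proj (Wpair Ω w i j) (FrF Ω G i j φ ψ)
                  (uind (chiE Ω G i j) (chiE Ω G i j q)) p -
                proj (Wpair Ω w i j) (Fr Ω G i j φ)
                  (uind (chiE Ω G i j) (chiE Ω G i j q)) q) ^ 2) q) :=
        (EPhi_sum_comm Ω w hw htot N _).symm
    _ ≤ EPhi Ω w N (fun ψ =>
          En (Wpair Ω w i j) (chiE Ω G i j) (FrF Ω G i j φ ψ) -
            En (Wpair Ω w i j) (chiE Ω G i j) (Fr Ω G i j φ)) := by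
        refine EPhi_mono Ω w hw htot N fun ψ => ?_
        have href : Refines (FrF Ω G i j φ ψ) (Fr Ω G i j φ) :=
          FrF_refines_Fr Ω G i j φ ψ
        calc (∑ q : Ω i × Ω j, Wpair Ω w i j q *
              proj (Wpair Ω w i j) (Fr Ω G i j φ)
                (fun p =>
                  (proj (Wpair Ω w i j) (FrF Ω G i j φ ψ)
                      (uind (chiE Ω G i j) (chiE Ω G i j q)) p -
                    proj (Wpair Ω w i j) (Fr Ω G i j φ)
                      (uind (chiE Ω G i j) (chiE Ω G i j q)) q) ^ 2) q)
            = ∑ q : Ω i × Ω j, Wpair Ω w i j q *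
                proj (Wpair Ω w i j) (Fr Ω G i j φ)
                  (fun p =>
                    (proj (Wpair Ω w i j) (FrF Ω G i j φ ψ)
                        (uind (chiE Ω G i j) (chiE Ω G i j q)) p -
                      proj (Wpair Ω w i j) (Fr Ω G i j φ)
                        (uind (chiE Ω G i j) (chiE Ω G i j q)) p) ^ 2) q := by
              refine Finset.sum_congr rfl fun q _ => ?_
              congr 1
              refine proj_congr_fun fun p hp => ?_
              rw [proj_congr_class hp]
          _ = ∑ c : K₂, ∑ q : Ω i × Ω j, Wpair Ω w i j q *
                uind (chiE Ω G i j) c q *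
                proj (Wpair Ω w i j) (Fr Ω G i j φ)
                  (fun p =>
                    (proj (Wpair Ω w i j) (FrF Ω G i j φ ψ) (uind (chiE Ω G i j) c) p -
                      proj (Wpair Ω w i j) (Fr Ω G i j φ) (uind (chiE Ω G i j) c) p) ^ 2) q := by
              rw [Finset.sum_comm]
              refine Finset.sum_congr rfl fun q _ => ?_
              exact (sum_pick (chiE Ω G i j) (fun c q' =>
                proj (Wpair Ω w i j) (Fr Ω G i j φ)
                  (fun p =>
                    (proj (Wpair Ω w i j) (FrF Ω G i j φ ψ) (uind (chiE Ω G i j) c) p -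
                      proj (Wpair Ω w i j) (Fr Ω G i j φ) (uind (chiE Ω G i j) c) p) ^ 2) q') q).symm
          _ = ∑ c : K₂, ∑ q : Ω i × Ω j, Wpair Ω w i j q *
                ((proj (Wpair Ω w i j) (FrF Ω G i j φ ψ) (uind (chiE Ω G i j) c) q -
                  proj (Wpair Ω w i j) (Fr Ω G i j φ) (uind (chiE Ω G i j) c) q) ^ 2) *
                proj (Wpair Ω w i j) (Fr Ω G i j φ) (uind (chiE Ω G i j) c) q := by
              refine Finset.sum_congr rfl fun c _ => ?_
              exact selfadj hWnn (Fr Ω G i j φ) (uind (chiE Ω G i j) c)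
                (fun p =>
                  (proj (Wpair Ω w i j) (FrF Ω G i j φ ψ) (uind (chiE Ω G i j) c) p -
                    proj (Wpair Ω w i j) (Fr Ω G i j φ) (uind (chiE Ω G i j) c) p) ^ 2)
          _ ≤ ∑ c : K₂, ∑ q : Ω i × Ω j, Wpair Ω w i j q *
                (proj (Wpair Ω w i j) (FrF Ω G i j φ ψ) (uind (chiE Ω G i j) c) q -
                  proj (Wpair Ω w i j) (Fr Ω G i j φ) (uind (chiE Ω G i j) c) q) ^ 2 := by
              refine Finset.sum_le_sum fun c _ => Finset.sum_le_sum fun q _ => ?_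
              exact mul_le_of_le_one_right
                (mul_nonneg (hWnn q) (sq_nonneg _))
                (proj_le_one hWnn (uind_le_one (chiE Ω G i j) c) q)
          _ = En (Wpair Ω w i j) (chiE Ω G i j) (FrF Ω G i j φ ψ) -
                En (Wpair Ω w i j) (chiE Ω G i j) (Fr Ω G i j φ) :=
              En_increment hWnn (chiE Ω G i j) href
    _ = EPhi Ω w N (fun ψ =>
            En (Wpair Ω w i j) (chiE Ω G i j) (FrF Ω G i j φ ψ)) -
          En (Wpair Ω w i j) (chiE Ω G i j) (Fr Ω G i j φ) := by
        rw [EPhi_sub Ω w N _ (fun _ =>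
          En (Wpair Ω w i j) (chiE Ω G i j) (Fr Ω G i j φ)),
          EPhi_const Ω w hw htot N]

lemma EPhi_FrF_eq (hw : ∀ i x, 0 ≤ w i x) (htot : ∀ i, ∑ x : Ω i, w i x = 1)
    (G : CGraph Ω K₁ K₂) (i j : Fin r) (M N : ℕ) :
    EPhi Ω w M (fun φ => EPhi Ω w N (fun ψ =>
        En (Wpair Ω w i j) (chiE Ω G i j) (FrF Ω G i j φ ψ))) =
      EPhi Ω w (M + N) (fun φ =>
        En (Wpair Ω w i j) (chiE Ω G i j) (Fr Ω G i j φ)) := by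
  rw [EPhi_split Ω w hw htot M N]
  refine EPhi_congr Ω w M fun φ => EPhi_congr Ω w N fun ψ => ?_
  exact (En_congr_iff (chiE Ω G i j)
    (fun p p' => Fr_append_iff Ω G i j φ ψ p p')).symm

lemma Afun_mono (hw : ∀ i x, 0 ≤ w i x) (htot : ∀ i, ∑ x : Ω i, w i x = 1)
    (G : CGraph Ω K₁ K₂) (i j : Fin r) (K L : ℕ) :
    EPhi Ω w K (fun φ => En (Wpair Ω w i j) (chiE Ω G i j) (Fr Ω G i j φ)) ≤
      EPhi Ω w (K + L) (fun φ =>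
        En (Wpair Ω w i j) (chiE Ω G i j) (Fr Ω G i j φ)) := by
  rw [EPhi_split Ω w hw htot K L]
  refine EPhi_mono Ω w hw htot K fun φ => ?_
  have hc : En (Wpair Ω w i j) (chiE Ω G i j) (Fr Ω G i j φ) =
      EPhi Ω w L (fun _ => En (Wpair Ω w i j) (chiE Ω G i j) (Fr Ω G i j φ)) :=
    (EPhi_const Ω w hw htot L _).symm
  rw [hc]
  refine EPhi_mono Ω w hw htot L fun ρ => ?_
  exact En_mono (Wpair_nonneg Ω w hw i j) (chiE Ω G i j)
    (Fr_refines_restrict Ω G i j φ ρ)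

lemma Afun_le_one (hw : ∀ i x, 0 ≤ w i x) (htot : ∀ i, ∑ x : Ω i, w i x = 1)
    (G : CGraph Ω K₁ K₂) (i j : Fin r) (K : ℕ) :
    EPhi Ω w K (fun φ => En (Wpair Ω w i j) (chiE Ω G i j) (Fr Ω G i j φ)) ≤ 1 := by
  calc EPhi Ω w K (fun φ => En (Wpair Ω w i j) (chiE Ω G i j) (Fr Ω G i j φ))
      ≤ EPhi Ω w K (fun _ => 1) :=
        EPhi_mono Ω w hw htot K fun φ =>
          En_le_one (Wpair_nonneg Ω w hw i j) (Wpair_sum_one Ω w htot i j)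
            (chiE Ω G i j) (Fr Ω G i j φ)
    _ = 1 := EPhi_const Ω w hw htot K 1

lemma Afun_nonneg (hw : ∀ i x, 0 ≤ w i x) (htot : ∀ i, ∑ x : Ω i, w i x = 1)
    (G : CGraph Ω K₁ K₂) (i j : Fin r) (K : ℕ) :
    0 ≤ EPhi Ω w K (fun φ => En (Wpair Ω w i j) (chiE Ω G i j) (Fr Ω G i j φ)) :=
  EPhi_nonneg Ω w hw htot K fun φ =>
    En_nonneg (Wpair_nonneg Ω w hw i j) (chiE Ω G i j) (Fr Ω G i j φ)

end MainChain

section KeyStep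

variable {r : ℕ} (Ω : Fin r → Type) [∀ i, Fintype (Ω i)]
  (w : ∀ i, Ω i → ℝ) {K₁ K₂ : Type} [Fintype K₁] [Fintype K₂]

lemma key_step (hw : ∀ i x, 0 ≤ w i x) (htot : ∀ i, ∑ x : Ω i, w i x = 1)
    (G : CGraph Ω K₁ K₂) (i j : Fin r) (M N' : ℕ) :
    (EPhi Ω w M (fun φ =>
      ∑ x : Ω i, ∑ y : Ω j, w i x * w j y *
        Real.sqrt (eta Ω w (regz Ω G φ) N' i j
          ((regz Ω G φ).eCol i j x y)
          ((regz Ω G φ).vCol i x) ((regz Ω G φ).vCol j y)))) ^ 2 ≤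
    EPhi Ω w (M + N') (fun φ =>
        En (Wpair Ω w i j) (chiE Ω G i j) (Fr Ω G i j φ)) -
      EPhi Ω w M (fun φ =>
        En (Wpair Ω w i j) (chiE Ω G i j) (Fr Ω G i j φ)) := by
  have hWnn : ∀ p, 0 ≤ Wpair Ω w i j p := Wpair_nonneg Ω w hw i j
  have hW1 : ∑ p : Ω i × Ω j, Wpair Ω w i j p = 1 := Wpair_sum_one Ω w htot i j
  have hpair : ∀ φ : PMap Ω M,
      (∑ x : Ω i, ∑ y : Ω j, w i x * w j y *
        Real.sqrt (eta Ω w (regz Ω G φ) N' i j ((regz Ω G φ).eCol i j x y)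
          ((regz Ω G φ).vCol i x) ((regz Ω G φ).vCol j y))) =
      ∑ q : Ω i × Ω j, Wpair Ω w i j q *
        Real.sqrt (eta Ω w (regz Ω G φ) N' i j (chiE Ω G i j q)
          ((regz Ω G φ).vCol i q.1) ((regz Ω G φ).vCol j q.2)) := fun φ =>
    (sum_pair Ω i j (fun x y => w i x * w j y *
        Real.sqrt (eta Ω w (regz Ω G φ) N' i j ((regz Ω G φ).eCol i j x y)
          ((regz Ω G φ).vCol i x) ((regz Ω G φ).vCol j y)))).symm
  have jens : ∀ φ : PMap Ω M,
      (∑ q : Ω i × Ω j, Wpair Ω w i j q *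
        Real.sqrt (eta Ω w (regz Ω G φ) N' i j (chiE Ω G i j q)
          ((regz Ω G φ).vCol i q.1) ((regz Ω G φ).vCol j q.2))) ^ 2 ≤
      ∑ q : Ω i × Ω j, Wpair Ω w i j q *
        eta Ω w (regz Ω G φ) N' i j (chiE Ω G i j q)
          ((regz Ω G φ).vCol i q.1) ((regz Ω G φ).vCol j q.2) := by
    intro φ
    have h1 := jensen_sq univ (Wpair Ω w i j)
      (fun q => Real.sqrt (eta Ω w (regz Ω G φ) N' i j (chiE Ω G i j q)
        ((regz Ω G φ).vCol i q.1) ((regz Ω G φ).vCol j q.2)))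
      (fun q _ => hWnn q) hW1
    calc (∑ q : Ω i × Ω j, Wpair Ω w i j q *
          Real.sqrt (eta Ω w (regz Ω G φ) N' i j (chiE Ω G i j q)
            ((regz Ω G φ).vCol i q.1) ((regz Ω G φ).vCol j q.2))) ^ 2
        ≤ ∑ q : Ω i × Ω j, Wpair Ω w i j q *
            Real.sqrt (eta Ω w (regz Ω G φ) N' i j (chiE Ω G i j q)
              ((regz Ω G φ).vCol i q.1) ((regz Ω G φ).vCol j q.2)) ^ 2 := h1
      _ = ∑ q : Ω i × Ω j, Wpair Ω w i j q *
            eta Ω w (regz Ω G φ) N' i j (chiE Ω G i j q)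
              ((regz Ω G φ).vCol i q.1) ((regz Ω G φ).vCol j q.2) := by
          refine Finset.sum_congr rfl fun q _ => ?_
          rw [Real.sq_sqrt (eta_nonneg' Ω w hw htot G i j φ N' q)]
  calc (EPhi Ω w M (fun φ =>
      ∑ x : Ω i, ∑ y : Ω j, w i x * w j y *
        Real.sqrt (eta Ω w (regz Ω G φ) N' i j
          ((regz Ω G φ).eCol i j x y)
          ((regz Ω G φ).vCol i x) ((regz Ω G φ).vCol j y)))) ^ 2
      = (EPhi Ω w M (fun φ =>
          ∑ q : Ω i × Ω j, Wpair Ω w i j q *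
            Real.sqrt (eta Ω w (regz Ω G φ) N' i j (chiE Ω G i j q)
              ((regz Ω G φ).vCol i q.1) ((regz Ω G φ).vCol j q.2)))) ^ 2 := by
        rw [EPhi_congr Ω w M hpair]
    _ ≤ EPhi Ω w M (fun φ =>
          (∑ q : Ω i × Ω j, Wpair Ω w i j q *
            Real.sqrt (eta Ω w (regz Ω G φ) N' i j (chiE Ω G i j q)
              ((regz Ω G φ).vCol i q.1) ((regz Ω G φ).vCol j q.2))) ^ 2) :=
        EPhi_sq_le Ω w hw htot M _
    _ ≤ EPhi Ω w M (fun φ =>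
          ∑ q : Ω i × Ω j, Wpair Ω w i j q *
            eta Ω w (regz Ω G φ) N' i j (chiE Ω G i j q)
              ((regz Ω G φ).vCol i q.1) ((regz Ω G φ).vCol j q.2)) :=
        EPhi_mono Ω w hw htot M jens
    _ ≤ EPhi Ω w M (fun φ =>
          EPhi Ω w N' (fun ψ =>
            En (Wpair Ω w i j) (chiE Ω G i j) (FrF Ω G i j φ ψ)) -
          En (Wpair Ω w i j) (chiE Ω G i j) (Fr Ω G i j φ)) :=
        EPhi_mono Ω w hw htot M fun φ => sum_eta_le Ω w hw htot G i j φ N'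
    _ = EPhi Ω w M (fun φ =>
          EPhi Ω w N' (fun ψ =>
            En (Wpair Ω w i j) (chiE Ω G i j) (FrF Ω G i j φ ψ))) -
        EPhi Ω w M (fun φ =>
          En (Wpair Ω w i j) (chiE Ω G i j) (Fr Ω G i j φ)) :=
        EPhi_sub Ω w M _ _
    _ = EPhi Ω w (M + N') (fun φ =>
            En (Wpair Ω w i j) (chiE Ω G i j) (Fr Ω G i j φ)) -
          EPhi Ω w M (fun φ =>
            En (Wpair Ω w i j) (chiE Ω G i j) (Fr Ω G i j φ)) := by
        rw [EPhi_FrF_eq Ω w hw htot G i j M N']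

end KeyStep

end IshAux

/-- eq. (\ref{lj20}): bounding the average error size by
telescoping. If `m 0 = 0` and `m (n+1) ≥ m n + M(m n)·h`, then for every
index pair `I = {i,j}`:
`(E_n E_{φ∈Φ(m n)} E_{ẽ∈Ω_I}[√(η(G*⟨ẽ⟩))])² ≤ b₂/ñ`, where `G* = G/φ` and `η`
is computed for `G*` with `M = M(m n)`. -/
theorem sqrt_eta_average_bound {r : ℕ} (hr : 2 ≤ r) (h b₁ b₂ : ℕ)
    (hh : 1 ≤ h) (hb₁ : 1 ≤ b₁) (hb₂ : 1 ≤ b₂) (ε : ℝ) (hε : 0 < ε)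
    (m : ℕ → ℕ) (hm0 : m 0 = 0)
    (hmrec : ∀ n : ℕ, m n + Mconst r h b₁ b₂ ε (m n) * h ≤ m (n + 1))
    (nt : ℕ) (hnt : 1 ≤ nt)
    (Ω : Fin r → Type) [∀ i, Fintype (Ω i)] [∀ i, Nonempty (Ω i)]
    (w : ∀ i, Ω i → ℝ) (hw : ∀ i x, 0 ≤ w i x) (htot : ∀ i, ∑ x : Ω i, w i x = 1)
    {K₁ K₂ : Type} [Fintype K₁] [Fintype K₂] (G : CGraph Ω K₁ K₂)
    (hG : G.Bounded b₁ b₂) (i j : Fin r) (hij : i ≠ j) :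
    ((1 / nt : ℝ) * ∑ n ∈ Finset.range nt,
        EPhi Ω w (m n) (fun φ =>
          ∑ x : Ω i, ∑ y : Ω j, w i x * w j y *
            Real.sqrt (eta Ω w (regz Ω G φ) (Mconst r h b₁ b₂ ε (m n) * h) i j
              ((regz Ω G φ).eCol i j x y)
              ((regz Ω G φ).vCol i x) ((regz Ω G φ).vCol j y)))) ^ 2 ≤
      b₂ / nt := by
    classical
  have hntR : (1 : ℝ) ≤ (nt : ℝ) := by exact_mod_cast hnt
  have hntpos : (0 : ℝ) < (nt : ℝ) := lt_of_lt_of_le one_pos hntR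
  have hinv_nonneg : (0 : ℝ) ≤ 1 / (nt : ℝ) := by positivity
  -- the energy average at level K
  set A : ℕ → ℝ := fun K => EPhi Ω w K (fun φ =>
    IshAux.En (IshAux.Wpair Ω w i j) (IshAux.chiE Ω G i j)
      (IshAux.Fr Ω G i j φ)) with hAdef
  have key : ∀ n : ℕ,
      (EPhi Ω w (m n) (fun φ =>
        ∑ x : Ω i, ∑ y : Ω j, w i x * w j y *
          Real.sqrt (eta Ω w (regz Ω G φ) (Mconst r h b₁ b₂ ε (m n) * h) i j
            ((regz Ω G φ).eCol i j x y)
            ((regz Ω G φ).vCol i x) ((regz Ω G φ).vCol j y)))) ^ 2 ≤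
      A (m (n + 1)) - A (m n) := by
    intro n
    have h1 := IshAux.key_step Ω w hw htot G i j (m n) (Mconst r h b₁ b₂ ε (m n) * h)
    have h2 : A (m n + Mconst r h b₁ b₂ ε (m n) * h) ≤ A (m (n + 1)) := by
      obtain ⟨L, hL⟩ := Nat.exists_eq_add_of_le (hmrec n)
      have h3 := IshAux.Afun_mono Ω w hw htot G i j
        (m n + Mconst r h b₁ b₂ ε (m n) * h) L
      rw [← hL] at h3
      exact h3
    have h4 : A (m n + Mconst r h b₁ b₂ ε (m n) * h) - A (m n) ≤
        A (m (n + 1)) - A (m n) := by linarith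
    exact le_trans h1 h4
  have hsum1 : ∑ _n ∈ Finset.range nt, (1 / nt : ℝ) = 1 := by
    rw [Finset.sum_const, Finset.card_range, nsmul_eq_mul]
    field_simp
  calc ((1 / nt : ℝ) * ∑ n ∈ Finset.range nt,
        EPhi Ω w (m n) (fun φ =>
          ∑ x : Ω i, ∑ y : Ω j, w i x * w j y *
            Real.sqrt (eta Ω w (regz Ω G φ) (Mconst r h b₁ b₂ ε (m n) * h) i j
              ((regz Ω G φ).eCol i j x y)
              ((regz Ω G φ).vCol i x) ((regz Ω G φ).vCol j y)))) ^ 2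
      = (∑ n ∈ Finset.range nt, (1 / nt : ℝ) *
          EPhi Ω w (m n) (fun φ =>
            ∑ x : Ω i, ∑ y : Ω j, w i x * w j y *
              Real.sqrt (eta Ω w (regz Ω G φ) (Mconst r h b₁ b₂ ε (m n) * h) i j
                ((regz Ω G φ).eCol i j x y)
                ((regz Ω G φ).vCol i x) ((regz Ω G φ).vCol j y)))) ^ 2 := by
        rw [Finset.mul_sum]
    _ ≤ ∑ n ∈ Finset.range nt, (1 / nt : ℝ) *
          (EPhi Ω w (m n) (fun φ =>
            ∑ x : Ω i, ∑ y : Ω j, w i x * w j y *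
              Real.sqrt (eta Ω w (regz Ω G φ) (Mconst r h b₁ b₂ ε (m n) * h) i j
                ((regz Ω G φ).eCol i j x y)
                ((regz Ω G φ).vCol i x) ((regz Ω G φ).vCol j y)))) ^ 2 :=
        IshAux.jensen_sq (Finset.range nt) (fun _ => (1 / nt : ℝ)) _
          (fun _ _ => hinv_nonneg) hsum1
    _ ≤ ∑ n ∈ Finset.range nt, (1 / nt : ℝ) * (A (m (n + 1)) - A (m n)) :=
        Finset.sum_le_sum fun n _ =>
          mul_le_mul_of_nonneg_left (key n) hinv_nonneg
    _ = (1 / nt : ℝ) * ∑ n ∈ Finset.range nt, (A (m (n + 1)) - A (m n)) :=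
        (Finset.mul_sum _ _ _).symm
    _ = (1 / nt : ℝ) * (A (m nt) - A (m 0)) := by
        rw [Finset.sum_range_sub (fun n => A (m n)) nt]
    _ ≤ (1 / nt : ℝ) * 1 := by
        have hle1 : A (m nt) ≤ 1 := IshAux.Afun_le_one Ω w hw htot G i j (m nt)
        have hge0 : 0 ≤ A (m 0) := IshAux.Afun_nonneg Ω w hw htot G i j (m 0)
        have : A (m nt) - A (m 0) ≤ 1 := by linarith
        exact mul_le_mul_of_nonneg_left this hinv_nonneg
    _ ≤ (b₂ : ℝ) / nt := by
        rw [mul_one]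
        have hb₂R : (1 : ℝ) ≤ (b₂ : ℝ) := by exact_mod_cast hb₂
        rw [div_le_div_iff₀ hntpos hntpos]
        nlinarith
end
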